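/- arXiv:1605.08721 — 9 statements merged into one kernel-verified Lean document; each statement's English description precedes it below -/
import Mathlib

section
/- If f(p) = D(a_0,...,a_n;p) is an optimal penalty function (i.e., (a_0,...,a_n) minimizes the sup-norm of D over all choices in [0,1]^{n+1}), then no a_i is a point of absolute maximum of f; that is, M(f) \cap {a_0,...,a_n} = \emptyset, where M(f) = {x \in [0,1] : f(x) = \|f\|_\infty}. -/
open Finset Filter Topology

/-- The penalty function `D(a₀,…,aₙ;p)`. -/
noncomputable def penalty (n : ℕ) (a : Fin (n+1) → ℝ) (p : ℝ) : ℝ :=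
  ∑ k : Fin (n+1), (n.choose (k:ℕ) : ℝ) * p ^ (k:ℕ) * (1 - p) ^ (n - (k:ℕ)) * |p - a k|

/-- `(a₀,…,aₙ)` is optimal: all aₖ lie in `[0,1]` and the sup-norm of the penalty
function on `[0,1]` is minimal among all such tuples. -/
def IsOptimal (n : ℕ) (a : Fin (n+1) → ℝ) : Prop :=
  (∀ k, a k ∈ Set.Icc (0:ℝ) 1) ∧
  ∀ b : Fin (n+1) → ℝ, (∀ k, b k ∈ Set.Icc (0:ℝ) 1) →
    sSup ((fun p => penalty n a p) '' Set.Icc (0:ℝ) 1) ≤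
      sSup ((fun p => penalty n b p) '' Set.Icc (0:ℝ) 1)

/-- The binomial weight. -/
noncomputable def W (n : ℕ) (k : Fin (n+1)) (p : ℝ) : ℝ :=
  (n.choose (k:ℕ) : ℝ) * p ^ (k:ℕ) * (1 - p) ^ (n - (k:ℕ))

lemma penalty_eq (n : ℕ) (a : Fin (n+1) → ℝ) (p : ℝ) :
    penalty n a p = ∑ k : Fin (n+1), W n k p * |p - a k| := rfl

lemma W_nonneg (n : ℕ) (k : Fin (n+1)) {p : ℝ} (h0 : 0 ≤ p) (h1 : p ≤ 1) :
    0 ≤ W n k p := by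
  have : (0:ℝ) ≤ 1 - p := by linarith
  unfold W; positivity

lemma W_sum (n : ℕ) (p : ℝ) : ∑ k : Fin (n+1), W n k p = 1 := by
  have h := add_pow p (1-p) n
  simp only [add_sub_cancel, one_pow] at h
  unfold W
  rw [Fin.sum_univ_eq_sum_range (fun k => (n.choose k : ℝ) * p ^ k * (1 - p) ^ (n - k))]
  calc ∑ i ∈ Finset.range (n+1), (n.choose i : ℝ) * p ^ i * (1 - p) ^ (n - i)
      = ∑ i ∈ Finset.range (n+1), p ^ i * (1 - p) ^ (n - i) * (n.choose i : ℝ) := by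
        apply Finset.sum_congr rfl; intros; ring
    _ = 1 := h.symm

lemma W_le_one (n : ℕ) (k : Fin (n+1)) {p : ℝ} (h0 : 0 ≤ p) (h1 : p ≤ 1) :
    W n k p ≤ 1 := by
  have h := Finset.single_le_sum (f := fun j => W n j p)
    (fun j _ => W_nonneg n j h0 h1) (Finset.mem_univ k)
  rwa [W_sum] at h

lemma penalty_nonneg (n : ℕ) (a : Fin (n+1) → ℝ) {p : ℝ} (h0 : 0 ≤ p) (h1 : p ≤ 1) :
    0 ≤ penalty n a p := by
  rw [penalty_eq]
  exact Finset.sum_nonneg fun k _ => mul_nonneg (W_nonneg n k h0 h1) (abs_nonneg _)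

lemma penalty_continuous (n : ℕ) (a : Fin (n+1) → ℝ) : Continuous (penalty n a) := by
  unfold penalty
  exact continuous_finset_sum _ fun k _ => by fun_prop
lemma penalty_zero (n : ℕ) (a : Fin (n+1) → ℝ) : penalty n a 0 = |a 0| := by
  rw [penalty_eq]
  rw [Finset.sum_eq_single_of_mem (0 : Fin (n+1)) (Finset.mem_univ _)]
  · simp [W]
  · intro k _ hk
    have hv : (k:ℕ) ≠ 0 := fun h => hk (Fin.ext h)
    simp [W, zero_pow hv]

lemma penalty_one (n : ℕ) (a : Fin (n+1) → ℝ) : penalty n a 1 = |1 - a (Fin.last n)| := by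
  rw [penalty_eq]
  rw [Finset.sum_eq_single_of_mem (Fin.last n) (Finset.mem_univ _)]
  · simp [W]
  · intro k _ hk
    have hv : n - (k:ℕ) ≠ 0 := by
      have : (k:ℕ) < n := by
        rcases lt_or_eq_of_le (Nat.lt_succ_iff.mp k.isLt) with h | h
        · exact h
        · exact absurd (Fin.ext h) hk
      omega
    simp [W, zero_pow hv]

lemma penalty_const (n : ℕ) (c p : ℝ) :
    penalty n (fun _ => c) p = |p - c| := by
  rw [penalty_eq]
  have : ∑ k : Fin (n+1), W n k p * |p - c| = (∑ k : Fin (n+1), W n k p) * |p - c| :=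
    (Finset.sum_mul _ _ _).symm
  rw [this, W_sum, one_mul]

/-- Any value of the penalty on `[0,1]` is at most the sup. -/
lemma penalty_le_sSup (n : ℕ) (a : Fin (n+1) → ℝ) {p : ℝ} (hp : p ∈ Set.Icc (0:ℝ) 1) :
    penalty n a p ≤ sSup ((fun p => penalty n a p) '' Set.Icc (0:ℝ) 1) := by
  apply le_csSup
  · exact (isCompact_Icc.image (penalty_continuous n a)).bddAbove
  · exact Set.mem_image_of_mem _ hp

lemma sSup_mem_penalty (n : ℕ) (a : Fin (n+1) → ℝ) :
    sSup ((fun p => penalty n a p) '' Set.Icc (0:ℝ) 1) ∈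
      ((fun p => penalty n a p) '' Set.Icc (0:ℝ) 1) := by
  apply IsCompact.sSup_mem (isCompact_Icc.image (penalty_continuous n a))
  exact (Set.nonempty_Icc.mpr (by norm_num)).image _
lemma sSup_le_half (n : ℕ) (a : Fin (n+1) → ℝ) (ha : IsOptimal n a) :
    sSup ((fun p => penalty n a p) '' Set.Icc (0:ℝ) 1) ≤ 1/2 := by
  have h := ha.2 (fun _ => (1:ℝ)/2) (fun _ => by constructor <;> norm_num)
  refine h.trans (csSup_le ((Set.nonempty_Icc.mpr (by norm_num)).image _) ?_)
  rintro y ⟨p, hp, rfl⟩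
  show penalty n (fun _ => (1:ℝ)/2) p ≤ 1/2
  rw [penalty_const, abs_le]
  rcases hp with ⟨h0, h1⟩
  constructor <;> linarith

lemma single_term_le (n : ℕ) (a : Fin (n+1) → ℝ) (k : Fin (n+1)) {p : ℝ}
    (h0 : 0 ≤ p) (h1 : p ≤ 1) : W n k p * |p - a k| ≤ penalty n a p := by
  rw [penalty_eq]
  exact Finset.single_le_sum (f := fun j => W n j p * |p - a j|)
    (fun j _ => mul_nonneg (W_nonneg n j h0 h1) (abs_nonneg _)) (Finset.mem_univ k)

lemma sSup_pos (n : ℕ) (a : Fin (n+1) → ℝ) :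
    0 < sSup ((fun p => penalty n a p) '' Set.Icc (0:ℝ) 1) := by
  by_contra h
  push_neg at h
  have h0 : penalty n a 0 ≤ 0 := (penalty_le_sSup n a (by norm_num)).trans h
  rw [penalty_zero] at h0
  have ha0 : a 0 = 0 := abs_eq_zero.mp (le_antisymm h0 (abs_nonneg _))
  have hhalf : penalty n a (1/2) ≤ 0 :=
    (penalty_le_sSup n a (by norm_num)).trans h
  have hterm : W n 0 (1/2) * |1/2 - a 0| ≤ penalty n a (1/2) :=
    single_term_le n a 0 (by norm_num) (by norm_num)
  rw [ha0] at hterm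
  have hW : W n 0 (1/2) = (1/2)^n := by norm_num [W]
  rw [hW] at hterm
  have : (0:ℝ) < (1/2)^n * |1/2 - 0| := by positivity
  linarith
lemma second_diff_tendsto {φ : ℝ → ℝ} {x d : ℝ} (h : HasDerivAt φ d x) :
    Tendsto (fun ε => (φ (x+ε) + φ (x-ε) - 2*φ x)/ε) (𝓝[>](0:ℝ)) (𝓝 0) := by
  have hs := hasDerivAt_iff_tendsto_slope.mp h
  have t1 : Tendsto (fun ε : ℝ => x + ε) (𝓝[>](0:ℝ)) (𝓝[≠] x) := by
    apply tendsto_nhdsWithin_of_tendsto_nhds_of_eventually_within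
    · have : Tendsto (fun ε : ℝ => x + ε) (𝓝 (0:ℝ)) (𝓝 x) := by
        have := ((continuous_const.add continuous_id) : Continuous (fun ε : ℝ => x + ε)).tendsto (0:ℝ)
        simpa [Pi.add_def] using this
      exact this.mono_left nhdsWithin_le_nhds
    · filter_upwards [self_mem_nhdsWithin] with ε hε
      have : (0:ℝ) < ε := hε
      simp only [Set.mem_compl_iff, Set.mem_singleton_iff]
      intro hc
      nlinarith [hc]
  have t2 : Tendsto (fun ε : ℝ => x - ε) (𝓝[>](0:ℝ)) (𝓝[≠] x) := by
    apply tendsto_nhdsWithin_of_tendsto_nhds_of_eventually_within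
    · have : Tendsto (fun ε : ℝ => x - ε) (𝓝 (0:ℝ)) (𝓝 x) := by
        have := ((continuous_const.sub continuous_id) : Continuous (fun ε : ℝ => x - ε)).tendsto (0:ℝ)
        simpa [Pi.sub_def] using this
      exact this.mono_left nhdsWithin_le_nhds
    · filter_upwards [self_mem_nhdsWithin] with ε hε
      have : (0:ℝ) < ε := hε
      simp only [Set.mem_compl_iff, Set.mem_singleton_iff]
      intro hc
      nlinarith [hc]
  have l1 := hs.comp t1
  have l2 := hs.comp t2
  have l := l1.sub l2
  rw [sub_self] at l
  apply l.congr'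
  filter_upwards [self_mem_nhdsWithin] with ε hε
  have hεpos : (0:ℝ) < ε := hε
  simp only [Function.comp_apply, slope_def_field]
  have h1 : x + ε - x = ε := by ring
  have h2 : x - ε - x = -ε := by ring
  rw [h1, h2]
  rw [div_neg, sub_neg_eq_add, ← add_div]
  congr 1
  ring
lemma W_continuous (n : ℕ) (k : Fin (n+1)) : Continuous (W n k) := by
  unfold W; fun_prop

lemma W_pos (n : ℕ) (k : Fin (n+1)) {p : ℝ} (h0 : 0 < p) (h1 : p < 1) :
    0 < W n k p := by
  have hc : 0 < (n.choose (k:ℕ) : ℝ) := by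
    exact_mod_cast Nat.choose_pos (Nat.lt_succ_iff.mp k.isLt)
  have : (0:ℝ) < 1 - p := by linarith
  unfold W; positivity

lemma interior_not_max (n : ℕ) (a : Fin (n+1) → ℝ) (i : Fin (n+1))
    (h0 : 0 < a i) (h1 : a i < 1)
    (hub : ∀ p ∈ Set.Icc (0:ℝ) 1, penalty n a p ≤ penalty n a (a i)) : False := by
  set x := a i with hx
  -- the termwise second-difference quotients
  set G : Fin (n+1) → ℝ → ℝ := fun k ε =>
    ((W n k (x+ε) * |x+ε - a k| + W n k (x-ε) * |x-ε - a k|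
      - 2 * (W n k x * |x - a k|)) / ε) with hG
  have hterm : ∀ k : Fin (n+1), Tendsto (G k) (𝓝[>](0:ℝ))
      (𝓝 (if a k = x then 2 * W n k x else 0)) := by
    intro k
    by_cases hk : a k = x
    · rw [if_pos hk]
      have hcont : Tendsto (fun ε : ℝ => W n k (x+ε) + W n k (x-ε)) (𝓝[>](0:ℝ))
          (𝓝 (2 * W n k x)) := by
        have c1 : Tendsto (fun ε : ℝ => W n k (x+ε)) (𝓝 (0:ℝ)) (𝓝 (W n k x)) := by
          have : Continuous fun ε : ℝ => W n k (x+ε) :=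
            (W_continuous n k).comp (continuous_const.add continuous_id)
          simpa using this.tendsto (0:ℝ)
        have c2 : Tendsto (fun ε : ℝ => W n k (x-ε)) (𝓝 (0:ℝ)) (𝓝 (W n k x)) := by
          have : Continuous fun ε : ℝ => W n k (x-ε) :=
            (W_continuous n k).comp (continuous_const.sub continuous_id)
          simpa using this.tendsto (0:ℝ)
        have := (c1.add c2).mono_left (nhdsWithin_le_nhds (s := Set.Ioi (0:ℝ)))
        simpa [two_mul] using this
      apply hcont.congr'
      filter_upwards [self_mem_nhdsWithin] with ε hε
      have hεpos : (0:ℝ) < ε := hε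
      rw [hG]
      simp only [hk]
      have e1 : |x + ε - x| = ε := by rw [abs_of_pos (by linarith)]; ring
      have e2 : |x - ε - x| = ε := by rw [abs_of_neg (by linarith)]; ring
      have e3 : |x - x| = 0 := by simp
      have hne : ε ≠ 0 := ne_of_gt hεpos
      rw [e1, e2, e3, mul_zero, mul_zero, sub_zero, ← add_mul, mul_div_assoc,
        div_self hne, mul_one]
    · rw [if_neg hk]
      -- the k-th term is differentiable at x
      have hWd : DifferentiableAt ℝ (W n k) x := by unfold W; fun_prop
      have habs : HasDerivAt (fun p : ℝ => |p - a k|) ((SignType.sign (x - a k) : ℝ)) x := by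
        have hne : x - a k ≠ 0 := sub_ne_zero.mpr (fun h : x = a k => hk h.symm)
        have h2 := (hasDerivAt_abs hne).comp x ((hasDerivAt_id x).sub_const (a k))
        simpa [Function.comp_def] using h2
      have hφ : HasDerivAt (fun p => W n k p * |p - a k|) _ x :=
        (hWd.hasDerivAt.mul habs)
      exact (second_diff_tendsto hφ).congr (fun ε => rfl)
  -- total limit
  have hL : Tendsto (fun ε => (penalty n a (x+ε) + penalty n a (x-ε) - 2 * penalty n a x) / ε)
      (𝓝[>](0:ℝ)) (𝓝 (∑ k : Fin (n+1), if a k = x then 2 * W n k x else 0)) := by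
    have := tendsto_finset_sum Finset.univ (fun k _ => hterm k)
    apply this.congr
    intro ε
    rw [penalty_eq, penalty_eq, penalty_eq, hG]
    rw [← Finset.sum_div]
    congr 1
    rw [Finset.sum_sub_distrib, Finset.sum_add_distrib, Finset.mul_sum]
  -- the limit is positive
  have hLpos : 0 < ∑ k : Fin (n+1), if a k = x then 2 * W n k x else 0 := by
    have hi : (2 : ℝ) * W n i x ≤ ∑ k : Fin (n+1), if a k = x then 2 * W n k x else 0 := by
      have hnn : ∀ k ∈ Finset.univ, (0:ℝ) ≤ (if a k = x then 2 * W n k x else 0) := by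
        intro k _
        split_ifs with h
        · nlinarith [W_nonneg n k h0.le (h1.le)]
        · exact le_rfl
      have := Finset.single_le_sum hnn (Finset.mem_univ i)
      rwa [if_pos hx.symm] at this
    have := W_pos n i h0 h1
    linarith
  -- extract a concrete ε
  have hev1 := hL.eventually (eventually_gt_nhds hLpos)
  have hr : (0:ℝ) < min x (1-x) := lt_min h0 (by linarith)
  have hev2 : Set.Ioo (0:ℝ) (min x (1-x)) ∈ 𝓝[>](0:ℝ) :=
    Ioo_mem_nhdsGT_of_mem ⟨le_refl 0, hr⟩
  obtain ⟨ε, hFpos, hεmem⟩ := (hev1.and (eventually_of_mem hev2 (fun _ h => h))).exists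
  obtain ⟨hεpos, hεlt⟩ := hεmem
  have hlt1 : ε < x := lt_of_lt_of_le hεlt (min_le_left _ _)
  have hlt2 : ε < 1 - x := lt_of_lt_of_le hεlt (min_le_right _ _)
  have hub1 : penalty n a (x+ε) ≤ penalty n a x :=
    hub _ ⟨by linarith, by linarith⟩
  have hub2 : penalty n a (x-ε) ≤ penalty n a x :=
    hub _ ⟨by linarith, by linarith⟩
  have hFle : (penalty n a (x+ε) + penalty n a (x-ε) - 2 * penalty n a x) / ε ≤ 0 := by
    apply div_nonpos_of_nonpos_of_nonneg _ (le_of_lt hεpos)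
    linarith
  linarith
lemma penalty_mirror (n : ℕ) (a : Fin (n+1) → ℝ) (p : ℝ) :
    penalty n (fun k => 1 - a k.rev) (1 - p) = penalty n a p := by
  unfold penalty
  refine Fintype.sum_equiv Fin.revPerm _ _ (fun k => ?_)
  simp only [Fin.revPerm_apply, Fin.val_rev]
  have hkn : (k:ℕ) ≤ n := Nat.lt_succ_iff.mp k.isLt
  have hv : n + 1 - ((k:ℕ) + 1) = n - (k:ℕ) := by omega
  rw [hv, Nat.choose_symm hkn, Nat.sub_sub_self hkn]
  have h1 : (1:ℝ) - (1 - p) = p := by ring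
  rw [h1]
  have h2 : |1 - p - (1 - a k.rev)| = |p - a k.rev| := by
    rw [show (1:ℝ) - p - (1 - a k.rev) = a k.rev - p by ring, abs_sub_comm]
  rw [h2]
  ring

lemma mirror_image (n : ℕ) (a : Fin (n+1) → ℝ) :
    ((fun p => penalty n (fun k => 1 - a k.rev) p) '' Set.Icc (0:ℝ) 1) =
      ((fun p => penalty n a p) '' Set.Icc (0:ℝ) 1) := by
  ext y
  constructor
  · rintro ⟨q, hq, rfl⟩
    refine ⟨1 - q, ⟨by linarith [hq.2], by linarith [hq.1]⟩, ?_⟩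
    show penalty n a (1-q) = penalty n (fun k => 1 - a k.rev) q
    rw [← penalty_mirror n a (1-q), show (1:ℝ) - (1 - q) = q by ring]
  · rintro ⟨q, hq, rfl⟩
    refine ⟨1 - q, ⟨by linarith [hq.2], by linarith [hq.1]⟩, ?_⟩
    exact penalty_mirror n a q

lemma mirror_optimal (n : ℕ) (a : Fin (n+1) → ℝ) (ha : IsOptimal n a) :
    IsOptimal n (fun k => 1 - a k.rev) := by
  constructor
  · intro k
    have h := ha.1 k.rev
    refine ⟨?_, ?_⟩
    · show (0:ℝ) ≤ 1 - a k.rev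
      linarith [h.2]
    · show (1:ℝ) - a k.rev ≤ 1
      linarith [h.1]
  · intro b hb
    rw [mirror_image]
    have hb' : ∀ k, (1 - b (Fin.rev k)) ∈ Set.Icc (0:ℝ) 1 := by
      intro k
      have h := hb k.rev
      exact ⟨by linarith [h.2], by linarith [h.1]⟩
    have h := ha.2 (fun k => 1 - b k.rev) hb'
    rwa [mirror_image n b] at h
lemma W_zero_eq (n : ℕ) (p : ℝ) : W n 0 p = (1-p)^n := by simp [W]

lemma W_last_eq (n : ℕ) (p : ℝ) : W n (Fin.last n) p = p^n := by simp [W]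

lemma choose_le_two_pow (n k : ℕ) : n.choose k ≤ 2^n := by
  rcases le_or_gt k n with h | h
  · calc n.choose k ≤ ∑ j ∈ Finset.range (n+1), n.choose j :=
        Finset.single_le_sum (fun j _ => Nat.zero_le _) (Finset.mem_range.mpr (by omega))
      _ = 2^n := Nat.sum_range_choose n
  · rw [Nat.choose_eq_zero_of_lt h]; positivity

lemma penalty_split (n : ℕ) (a b : Fin (n+1) → ℝ) (p : ℝ) :
    penalty n b p = penalty n a p + ∑ k : Fin (n+1), W n k p * (|p - b k| - |p - a k|) := by
  rw [penalty_eq, penalty_eq, ← Finset.sum_add_distrib]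
  exact Finset.sum_congr rfl (fun k _ => by ring)


private lemma hlp_dleE {e c A d : ℝ} (hd : d = e*c/4) (hcA : c ≤ A) (hA1 : A ≤ 1)
    (he : 0 < e) (hc : 0 < c) : d ≤ e := by
  subst hd
  have h1 : 0 ≤ e*(1 - c) := mul_nonneg he.le (by linarith)
  linarith

private lemma hlp_d'led {d c d' : ℝ} (hd' : d' = d*c/2) (hc1 : c ≤ 1) (hd : 0 < d)
    (hc : 0 < c) : d' ≤ d := by
  subst hd'
  have h1 : 0 ≤ d*(1 - c) := mul_nonneg hd.le (by linarith)
  linarith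

private lemma hlp_R1final {K e c A d d' : ℝ} (heK : e*K ≤ c*A/100) (hd : d = e*c/4)
    (hd' : d' = d*c/2) (hcA : c ≤ A) (he : 0 < e) (hc : 0 < c) (hA : 0 < A) :
    K*e^2/2 + d' < d*A := by
  subst hd' hd
  have h2 : 0 ≤ e*c*(A - c) := mul_nonneg (mul_nonneg he.le hc.le) (by linarith)
  have h3 := mul_le_mul_of_nonneg_right heK he.le
  have h4 : 0 < e*c*A := by positivity
  nlinarith [h2, h3, h4]

private lemma hlp_R2final {e c A d d' : ℝ} (hd : d = e*c/4) (hd' : d' = d*c/2)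
    (hcA : c ≤ A) (hA1 : A ≤ 1) (he : 0 < e) (hc : 0 < c) : d + d' < e*c := by
  subst hd' hd
  have h1 : 0 ≤ e*c*(1 - c) := mul_nonneg (mul_nonneg he.le hc.le) (by linarith)
  have h2 : 0 < e*c := mul_pos he hc
  nlinarith [h1, h2]

private lemma hlp_dltA {e c A d : ℝ} (hd : d = e*c/4) (hcA : c ≤ A) (he : 0 < e)
    (hA : 0 < A) (hc : 0 < c) : d < e*A := by
  subst hd
  have h1 : 0 ≤ e*(A - c) := mul_nonneg he.le (by linarith)
  have h2 : 0 < e*A := mul_pos he hA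
  linarith

set_option maxHeartbeats 1000000 in
lemma boundary_zero (n : ℕ) (hn : 0 < n) (a : Fin (n+1) → ℝ) (ha : IsOptimal n a)
    (i : Fin (n+1)) (hai : a i = 0)
    (hmax : penalty n a 0 = sSup ((fun p => penalty n a p) '' Set.Icc (0:ℝ) 1)) : False := by
  set M := sSup ((fun p => penalty n a p) '' Set.Icc (0:ℝ) 1) with hMdef
  have hub : ∀ p ∈ Set.Icc (0:ℝ) 1, penalty n a p ≤ M :=
    fun p hp => penalty_le_sSup n a hp
  have hM2 : M ≤ 1/2 := sSup_le_half n a ha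
  have hMpos : 0 < M := sSup_pos n a
  have ha0 : a 0 = M := by
    have h := penalty_zero n a
    rw [hmax, abs_of_nonneg (ha.1 0).1] at h
    exact h.symm
  have hi0 : i ≠ 0 := by
    intro h; rw [h, ha0] at hai; linarith
  have hiv1 : 1 ≤ (i:ℕ) := by
    rcases Nat.eq_zero_or_pos (i:ℕ) with h | h
    · exact absurd (Fin.ext h) hi0
    · exact h
  set aN := a (Fin.last n) with haNdef
  have haN1 : aN ≤ 1 := (ha.1 _).2
  have haN0 : 0 ≤ aN := (ha.1 _).1
  have h1ub : 1 - aN ≤ M := by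
    have h := hub 1 (by norm_num)
    rw [penalty_one] at h
    exact (abs_le.mp h).2
  have haNhalf : 1/2 ≤ aN := by linarith
  have hilast : i ≠ Fin.last n := by
    intro h; rw [h] at hai; rw [← haNdef] at hai; linarith
  have hin : (i:ℕ) < n := by
    rcases lt_or_eq_of_le (Nat.lt_succ_iff.mp i.isLt) with h | h
    · exact h
    · exact absurd (Fin.ext h) hilast
  have h0last : (0 : Fin (n+1)) ≠ Fin.last n := by
    intro h
    have := congrArg Fin.val h
    simp [Fin.val_last] at this
    omega
  -- constants
  set K : ℝ := 2^n with hKdef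
  have hK1 : (1:ℝ) ≤ K := one_le_pow₀ (by norm_num)
  set A : ℝ := (1/2)^n with hAdef
  have hApos : 0 < A := by positivity
  have hA1 : A ≤ 1 := by
    rw [hAdef]; exact pow_le_one₀ (by norm_num) (by norm_num)
  set c₀ : ℝ := (M/2)^n with hc₀def
  have hc₀pos : 0 < c₀ := by positivity
  have hc₀A : c₀ ≤ A := by
    rw [hc₀def, hAdef]
    exact pow_le_pow_left₀ (by linarith) (by linarith) n
  set ε : ℝ := min (M/2) (c₀ * A / (K * 100)) with hεdef
  have hεpos : 0 < ε := lt_min (by linarith) (by positivity)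
  have hεM2 : ε ≤ M/2 := min_le_left _ _
  have hεK : ε * K ≤ c₀ * A / 100 := by
    have h := min_le_right (M/2) (c₀ * A / (K * 100))
    rw [← hεdef] at h
    calc ε * K ≤ (c₀ * A / (K * 100)) * K := by
          apply mul_le_mul_of_nonneg_right h (by positivity)
      _ = c₀ * A / 100 := by field_simp
  set δ : ℝ := ε * c₀ / 4 with hδdef
  have hδpos : 0 < δ := by positivity
  set δ' : ℝ := δ * c₀ / 2 with hδ'def
  have hδ'pos : 0 < δ' := by positivity
  have hδε : δ ≤ ε := hlp_dleE hδdef hc₀A hA1 hεpos hc₀pos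
  have hδ'δ : δ' ≤ δ := hlp_d'led hδ'def (le_trans hc₀A hA1) hδpos hc₀pos
  have hδM2 : δ ≤ M/2 := le_trans hδε hεM2
  have hδ'M2 : δ' ≤ M/2 := le_trans hδ'δ hδM2
  -- the competitor tuple
  set bN : ℝ := if aN + δ' ≤ 1 - M/2 then aN + δ' else aN with hbNdef
  set b : Fin (n+1) → ℝ :=
    fun k => if k = 0 then M - δ else if k = i then ε else if k = Fin.last n then bN else a k
    with hbdef
  have hb0 : b 0 = M - δ := by rw [hbdef]; simp
  have hbi : b i = ε := by rw [hbdef]; simp [hi0]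
  have hblast : b (Fin.last n) = bN := by
    rw [hbdef]; simp [h0last.symm, Ne.symm hilast]
  have hbmem : ∀ k, b k ∈ Set.Icc (0:ℝ) 1 := by
    intro k
    rw [hbdef]
    dsimp only
    split_ifs with h1' h2' h3'
    · exact ⟨by linarith, by linarith⟩
    · exact ⟨by linarith, by linarith⟩
    · rw [hbNdef]
      split_ifs with h4'
      · exact ⟨by linarith, by linarith⟩
      · exact ⟨haN0, haN1⟩
    · exact ha.1 k
  clear_value M aN K A c₀ ε δ δ' bN b

  -- decomposition of the competitor's penalty
  have key : ∀ p : ℝ, penalty n b p = penalty n a p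
      + (1-p)^n * (|p - (M - δ)| - |p - M|)
      + W n i p * (|p - ε| - |p - 0|)
      + p^n * (|p - bN| - |p - aN|) := by
    intro p
    rw [penalty_split n a b p]
    have hzero : ∀ x ∈ Finset.univ, x ∉ ({0, i, Fin.last n} : Finset (Fin (n+1))) →
        W n x p * (|p - b x| - |p - a x|) = 0 := by
      intro x _ hx
      simp only [Finset.mem_insert, Finset.mem_singleton] at hx
      push_neg at hx
      have hbx : b x = a x := by rw [hbdef]; simp [hx.1, hx.2.1, hx.2.2]
      rw [hbx, sub_self, mul_zero]
    rw [← Finset.sum_subset (Finset.subset_univ ({0, i, Fin.last n} : Finset (Fin (n+1)))) hzero]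
    have h0notmem : (0 : Fin (n+1)) ∉ ({i, Fin.last n} : Finset (Fin (n+1))) := by
      simp [Ne.symm hi0, h0last]
    have hinotmem : i ∉ ({Fin.last n} : Finset (Fin (n+1))) := by simp [hilast]
    rw [Finset.sum_insert h0notmem, Finset.sum_insert hinotmem, Finset.sum_singleton]
    rw [hb0, hbi, hblast, ha0, hai, W_zero_eq, W_last_eq, haNdef]
    ring
  -- choose-value bounds
  have hC1 : (1:ℝ) ≤ (n.choose (i:ℕ) : ℝ) := by
    exact_mod_cast Nat.succ_le_of_lt (Nat.choose_pos (le_of_lt hin))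
  have hCK : ((n.choose (i:ℕ) : ℝ)) ≤ K := by
    rw [hKdef]; exact_mod_cast choose_le_two_pow n (i:ℕ)
  -- bound for the aN-term, valid everywhere
  have habsbN : |aN - bN| ≤ δ' := by
    rw [hbNdef]
    split_ifs
    · rw [show aN - (aN + δ') = -δ' by ring, abs_neg, abs_of_pos hδ'pos]
    · simp [hδ'pos.le]
  -- the main pointwise estimate
  have main : ∀ p ∈ Set.Icc (0:ℝ) 1, penalty n b p < M := by
    rintro p ⟨hp0, hp1⟩
    have hfle : penalty n a p ≤ M := hub p ⟨hp0, hp1⟩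
    have h1p0 : 0 ≤ 1 - p := by linarith
    have h1p1 : 1 - p ≤ 1 := by linarith
    -- generic bounds
    have hT0le : (1-p)^n * (|p - (M - δ)| - |p - M|) ≤ δ * (1-p)^n := by
      have h1 := abs_sub_abs_le_abs_sub (p - (M - δ)) (p - M)
      rw [show (p - (M-δ)) - (p - M) = δ by ring, abs_of_pos hδpos] at h1
      calc (1-p)^n * (|p - (M - δ)| - |p - M|) ≤ (1-p)^n * δ :=
            mul_le_mul_of_nonneg_left h1 (pow_nonneg h1p0 n)
        _ = δ * (1-p)^n := by ring
    have hTNle : p^n * (|p - bN| - |p - aN|) ≤ δ' := by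
      have h1 := abs_sub_abs_le_abs_sub (p - bN) (p - aN)
      rw [show (p - bN) - (p - aN) = aN - bN by ring] at h1
      have h2 : |p - bN| - |p - aN| ≤ δ' := le_trans h1 habsbN
      have h3 : p^n ≤ 1 := pow_le_one₀ hp0 hp1
      calc p^n * (|p - bN| - |p - aN|) ≤ p^n * δ' :=
            mul_le_mul_of_nonneg_left h2 (pow_nonneg hp0 n)
        _ ≤ 1 * δ' := mul_le_mul_of_nonneg_right h3 hδ'pos.le
        _ = δ' := one_mul _
    have hpow1 : (1-p)^n ≤ 1 := pow_le_one₀ h1p0 h1p1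
    rcases le_or_gt p (M/2) with hR1 | hmid
    · -- Region 1 : p ≤ M/2
      have hT0 : (1-p)^n * (|p - (M - δ)| - |p - M|) = -(δ * (1-p)^n) := by
        rw [abs_of_nonpos (by linarith), abs_of_nonpos (by linarith)]
        ring
      have hTi : W n i p * (|p - ε| - |p - 0|) ≤ K * ε^2 / 2 := by
        rw [sub_zero, abs_of_nonneg hp0]
        rcases le_or_gt p (ε/2) with hpe | hpe
        · have hWle : W n i p ≤ K * p := by
            have hpi : p^(i:ℕ) ≤ p := by
              calc p^(i:ℕ) ≤ p^1 := pow_le_pow_of_le_one hp0 hp1 hiv1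
                _ = p := pow_one p
            have hq1 : (1-p)^(n-(i:ℕ)) ≤ 1 := pow_le_one₀ h1p0 h1p1
            calc W n i p = (n.choose (i:ℕ) : ℝ) * p^(i:ℕ) * (1-p)^(n-(i:ℕ)) := rfl
              _ ≤ (n.choose (i:ℕ) : ℝ) * p^(i:ℕ) * 1 := by
                  apply mul_le_mul_of_nonneg_left hq1 (by positivity)
              _ = (n.choose (i:ℕ) : ℝ) * p^(i:ℕ) := by ring
              _ ≤ K * p^(i:ℕ) := mul_le_mul_of_nonneg_right hCK (pow_nonneg hp0 _)
              _ ≤ K * p := mul_le_mul_of_nonneg_left hpi (by linarith)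
          have habs : |p - ε| - p ≤ ε := by
            have := abs_sub_abs_le_abs_sub (p - ε) (p - 0)
            rw [show (p - ε) - (p - 0) = -ε by ring, abs_neg, abs_of_pos hεpos,
              sub_zero, abs_of_nonneg hp0] at this
            linarith
          have hWnn : 0 ≤ W n i p := W_nonneg n i hp0 hp1
          calc W n i p * (|p - ε| - p) ≤ W n i p * ε :=
              mul_le_mul_of_nonneg_left habs hWnn
            _ ≤ (K * p) * ε := mul_le_mul_of_nonneg_right hWle hεpos.le
            _ ≤ (K * (ε/2)) * ε := mul_le_mul_of_nonneg_right
                (mul_le_mul_of_nonneg_left hpe (by linarith)) hεpos.le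
            _ = K * ε^2 / 2 := by ring
        · have habs : |p - ε| ≤ p := abs_le.mpr ⟨by linarith, by linarith⟩
          have hWnn : 0 ≤ W n i p := W_nonneg n i hp0 hp1
          have h5 : W n i p * (|p - ε| - p) ≤ 0 := mul_nonpos_of_nonneg_of_nonpos hWnn (by linarith)
          have h6 : (0:ℝ) ≤ K * ε^2 / 2 := by positivity
          linarith
      have hAle : A ≤ (1-p)^n := by
        rw [hAdef]
        exact pow_le_pow_left₀ (by norm_num) (by linarith) n
      have hfinal : K * ε^2 / 2 + δ' < δ * A :=
        hlp_R1final hεK hδdef hδ'def hc₀A hεpos hc₀pos hApos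
      rw [key p]
      have : δ * A ≤ δ * (1-p)^n := mul_le_mul_of_nonneg_left hAle hδpos.le
      linarith
    · rcases le_or_gt p (1 - M/2) with hR2 | hright
      · -- Region 2 : M/2 < p ≤ 1 - M/2
        have hTi : W n i p * (|p - ε| - |p - 0|) ≤ c₀ * (-ε) := by
          rw [sub_zero, abs_of_nonneg hp0, abs_of_nonneg (by linarith : 0 ≤ p - ε)]
          have hfac : p - ε - p = -ε := by ring
          rw [hfac]
          have hWge : c₀ ≤ W n i p := by
            have hpi : (M/2)^(i:ℕ) ≤ p^(i:ℕ) := pow_le_pow_left₀ (by linarith) (by linarith) _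
            have hqi : (M/2)^(n-(i:ℕ)) ≤ (1-p)^(n-(i:ℕ)) := pow_le_pow_left₀ (by linarith) (by linarith) _
            have hsplit : c₀ = (M/2)^(i:ℕ) * (M/2)^(n-(i:ℕ)) := by
              rw [hc₀def, ← pow_add]
              congr 1
              omega
            calc c₀ = (M/2)^(i:ℕ) * (M/2)^(n-(i:ℕ)) := hsplit
              _ ≤ p^(i:ℕ) * (1-p)^(n-(i:ℕ)) := by
                  apply mul_le_mul hpi hqi (by positivity) (by positivity)
              _ ≤ (n.choose (i:ℕ) : ℝ) * (p^(i:ℕ) * (1-p)^(n-(i:ℕ))) :=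
                  le_mul_of_one_le_left (by positivity) hC1
              _ = W n i p := by rw [W]; ring
          exact mul_le_mul_of_nonpos_right hWge (by linarith)
        have hT0 : (1-p)^n * (|p - (M - δ)| - |p - M|) ≤ δ := by
          calc (1-p)^n * (|p - (M - δ)| - |p - M|) ≤ δ * (1-p)^n := hT0le
            _ ≤ δ * 1 := mul_le_mul_of_nonneg_left hpow1 hδpos.le
            _ = δ := mul_one δ
        rw [key p]
        have hfinal : δ + δ' < ε * c₀ :=
          hlp_R2final hδdef hδ'def hc₀A hA1 hεpos hc₀pos
        linarith
      · -- Region 3 : 1 - M/2 < p ≤ 1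
        rcases eq_or_lt_of_le hp1 with heq | hp1'
        · -- p = 1
          subst heq
          rw [penalty_one n b, hblast]
          rw [hbNdef]
          split_ifs with hc
          · rw [abs_of_nonneg (by linarith)]
            linarith
          · push_neg at hc
            rw [abs_of_nonneg (by linarith)]
            linarith
        · -- 1 - M/2 < p < 1
          have hp34 : (3:ℝ)/4 ≤ p := by linarith
          have hnipos : 0 < (1-p)^(n-(i:ℕ)) := by
            apply pow_pos; linarith
          have hT0 : (1-p)^n * (|p - (M - δ)| - |p - M|) ≤ δ * (1-p)^(n-(i:ℕ)) := by
            have hmono : (1-p)^n ≤ (1-p)^(n-(i:ℕ)) :=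
              pow_le_pow_of_le_one h1p0 h1p1 (Nat.sub_le n (i:ℕ))
            calc (1-p)^n * (|p - (M - δ)| - |p - M|) ≤ δ * (1-p)^n := hT0le
              _ ≤ δ * (1-p)^(n-(i:ℕ)) := mul_le_mul_of_nonneg_left hmono hδpos.le
          have hTi : W n i p * (|p - ε| - |p - 0|) ≤ (A * (1-p)^(n-(i:ℕ))) * (-ε) := by
            rw [sub_zero, abs_of_nonneg hp0, abs_of_nonneg (by linarith : 0 ≤ p - ε)]
            rw [show p - ε - p = -ε by ring]
            have hWge : A * (1-p)^(n-(i:ℕ)) ≤ W n i p := by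
              have hpi : A ≤ p^(i:ℕ) := by
                calc A = (1/2:ℝ)^n := hAdef
                  _ ≤ (1/2:ℝ)^(i:ℕ) := pow_le_pow_of_le_one (by norm_num) (by norm_num) (le_of_lt hin)
                  _ ≤ p^(i:ℕ) := pow_le_pow_left₀ (by norm_num) (by linarith) _
              calc A * (1-p)^(n-(i:ℕ)) ≤ p^(i:ℕ) * (1-p)^(n-(i:ℕ)) :=
                  mul_le_mul_of_nonneg_right hpi (pow_nonneg h1p0 _)
                _ ≤ (n.choose (i:ℕ) : ℝ) * (p^(i:ℕ) * (1-p)^(n-(i:ℕ))) :=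
                    le_mul_of_one_le_left (by positivity) hC1
                _ = W n i p := by rw [W]; ring
            exact mul_le_mul_of_nonpos_right hWge (by linarith)
          have hTN : p^n * (|p - bN| - |p - aN|) ≤ 0 := by
            have hpn : 0 ≤ p^n := pow_nonneg hp0 n
            rw [hbNdef]
            split_ifs with hc
            · have h1 : |p - (aN + δ')| = p - (aN + δ') := abs_of_nonneg (by linarith)
              have h2 : |p - aN| = p - aN := abs_of_nonneg (by linarith)
              rw [h1, h2, show p - (aN + δ') - (p - aN) = -δ' by ring]
              exact mul_nonpos_of_nonneg_of_nonpos hpn (by linarith)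
            · simp
          rw [key p]
          have hfinal : δ * (1-p)^(n-(i:ℕ)) + (A * (1-p)^(n-(i:ℕ))) * (-ε) < 0 := by
            have hδA : δ < ε * A := hlp_dltA hδdef hc₀A hεpos hApos hc₀pos
            have h7 : (1-p)^(n-(i:ℕ)) * (δ - ε * A) < 0 :=
              mul_neg_of_pos_of_neg hnipos (by linarith)
            linarith [h7]
          linarith
  -- conclude using optimality
  obtain ⟨q, hq, hEq⟩ := sSup_mem_penalty n b
  have h1 := main q hq
  have h2 := ha.2 b hbmem
  rw [← hMdef] at h2
  rw [← hEq] at h2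
  simp only at h2
  linarith
theorem stmt_3 (n : ℕ) (hn : 0 < n) (a : Fin (n+1) → ℝ) (ha : IsOptimal n a) :
    ∀ i : Fin (n+1),
      penalty n a (a i) ≠ sSup ((fun p => penalty n a p) '' Set.Icc (0:ℝ) 1) := by
  intro i hEq
  have hmem := ha.1 i
  rcases lt_or_eq_of_le hmem.1 with h0 | h0
  · rcases lt_or_eq_of_le hmem.2 with h1 | h1
    · -- interior case
      apply interior_not_max n a i h0 h1
      intro p hp
      rw [hEq]
      exact penalty_le_sSup n a hp
    · -- a i = 1 : mirror to the boundary-at-zero case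
      apply boundary_zero n hn (fun k => 1 - a (Fin.rev k)) (mirror_optimal n a ha) i.rev
      · show 1 - a i.rev.rev = 0
        rw [Fin.rev_rev, h1]
        ring
      · have h2 : penalty n (fun k => 1 - a (Fin.rev k)) 0 = penalty n a 1 := by
          have h3 := penalty_mirror n a 1
          rw [show (1:ℝ) - 1 = 0 by ring] at h3
          exact h3
        rw [h2, mirror_image n a]
        have h4 : penalty n a 1 = penalty n a (a i) := by rw [h1]
        rw [h4, hEq]
  · -- a i = 0
    apply boundary_zero n hn a ha i h0.symm
    have h2 : penalty n a 0 = penalty n a (a i) := by rw [← h0]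
    rw [h2, hEq]
end

section
/- Suppose for each n, K_n = {\alpha_{0n} \le \alpha_{1n} \le ... \le \alpha_{nn}} \subset [0,1] is an ordered node set and \lim_{n\to\infty} \|D(K_n;\cdot)\|_\infty = 0. Then the normalized counting measures \delta_{K_n} = \frac{1}{n+1}\sum_{j=0}^n \delta_{\alpha_{jn}} converge weak-* to the Lebesgue measure on [0,1]. -/
open Finset Filter

private lemma ibp_aux (k m : ℕ) :
    ((k:ℝ)+1) * ∫ x in (0:ℝ)..1, x^k * (1-x)^(m+1)
      = ((m:ℝ)+1) * ∫ x in (0:ℝ)..1, x^(k+1) * (1-x)^m := by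
  have hderiv : ∀ x ∈ Set.uIcc (0:ℝ) 1,
      HasDerivAt (fun x : ℝ => x^(k+1) * (1-x)^(m+1))
        (((k:ℝ)+1) * (x^k * (1-x)^(m+1)) - ((m:ℝ)+1) * (x^(k+1) * (1-x)^m)) x := by
    intro x _
    have h1 : HasDerivAt (fun x : ℝ => x^(k+1)) (((k:ℝ)+1) * x^k) x := by
      simpa using hasDerivAt_pow (k+1) x
    have h2 : HasDerivAt (fun x : ℝ => (1-x)^(m+1)) (-(((m:ℝ)+1) * (1-x)^m)) x := by
      have := (hasDerivAt_pow (m+1) (1-x)).comp x ((hasDerivAt_id x).const_sub 1)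
      simpa [Function.comp_def] using this
    have : HasDerivAt (fun x : ℝ => x^(k+1) * (1-x)^(m+1)) _ x := h1.mul h2
    convert this using 1
    ring
  have hi1 : IntervalIntegrable (fun x : ℝ => x^k * (1-x)^(m+1))
      MeasureTheory.volume 0 1 := by
    apply Continuous.intervalIntegrable; fun_prop
  have hi2 : IntervalIntegrable (fun x : ℝ => x^(k+1) * (1-x)^m)
      MeasureTheory.volume 0 1 := by
    apply Continuous.intervalIntegrable; fun_prop
  have hint : IntervalIntegrable (fun x : ℝ =>
      ((k:ℝ)+1) * (x^k * (1-x)^(m+1)) - ((m:ℝ)+1) * (x^(k+1) * (1-x)^m))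
      MeasureTheory.volume 0 1 := (hi1.const_mul _).sub (hi2.const_mul _)
  have h0 := intervalIntegral.integral_eq_sub_of_hasDerivAt hderiv hint
  rw [intervalIntegral.integral_sub (hi1.const_mul _) (hi2.const_mul _),
    intervalIntegral.integral_const_mul, intervalIntegral.integral_const_mul] at h0
  simp only [one_pow, sub_self, zero_pow, Nat.succ_ne_zero, ne_eq, not_false_iff,
    mul_zero, zero_mul, mul_one, sub_zero] at h0
  linarith [h0]

private lemma beta_nat : ∀ (k m : ℕ),
    (((k+m).choose k : ℕ) : ℝ) * ∫ x in (0:ℝ)..1, x^k * (1-x)^m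
      = 1/((k:ℝ)+(m:ℝ)+1) := by
  intro k
  induction k with
  | zero =>
    intro m
    simp only [Nat.zero_add, Nat.choose_zero_right, Nat.cast_one, one_mul, pow_zero,
      Nat.cast_zero, zero_add]
    have h := intervalIntegral.integral_comp_sub_left (a := (0:ℝ)) (b := 1)
      (fun x : ℝ => x^m) 1
    simp only [sub_self, sub_zero] at h
    rw [h, integral_pow]
    simp
  | succ k ih =>
    intro m
    have IH := ih (m+1)
    have hibp := ibp_aux k m
    have hchoose : (((k+m+1).choose (k+1) : ℕ) : ℝ) * ((k:ℝ)+1)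
        = (((k+m+1).choose k : ℕ) : ℝ) * ((m:ℝ)+1) := by
      have h := Nat.choose_succ_right_eq (k+m+1) k
      have h' : k+m+1-k = m+1 := by omega
      rw [h'] at h
      exact_mod_cast h
    have hm : ((m:ℝ)+1) ≠ 0 := by positivity
    have hkm : k+1+m = k+m+1 := by omega
    rw [hkm]
    refine mul_left_cancel₀ hm ?_
    have hc1 : ((k+(m+1)).choose k : ℕ) = ((k+m+1).choose k : ℕ) := by
      norm_num [Nat.add_assoc]
    rw [hc1] at IH
    push_cast at IH ⊢
    linear_combination (-(((k+m+1).choose (k+1) : ℕ) : ℝ)) * hibp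
      + (∫ x in (0:ℝ)..1, x^k * (1-x)^(m+1)) * hchoose + ((m:ℝ)+1) * IH

private lemma beta_choose (n k : ℕ) (hk : k ≤ n) :
    ∫ x in (0:ℝ)..1, (n.choose k : ℝ) * x^k * (1-x)^(n-k) = 1/((n:ℝ)+1) := by
  have h := beta_nat k (n-k)
  rw [show k + (n-k) = n from by omega] at h
  have hcast : (k:ℝ) + ((n-k : ℕ):ℝ) + 1 = (n:ℝ)+1 := by
    rw [Nat.cast_sub hk]; ring
  rw [hcast] at h
  rw [← h, ← intervalIntegral.integral_const_mul]
  congr 1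
  ext x
  ring

theorem stmt_8 (α : ℕ → ℕ → ℝ)
    (hmem : ∀ n, ∀ k ≤ n, α n k ∈ Set.Icc (0:ℝ) 1)
    (hord : ∀ n, ∀ j k, j ≤ k → k ≤ n → α n j ≤ α n k)
    (hnorm : Tendsto
      (fun n : ℕ => sSup ((fun p => ∑ k ∈ Finset.range (n+1),
        (n.choose k : ℝ) * p ^ k * (1 - p) ^ (n - k) * |p - α n k|) '' Set.Icc (0:ℝ) 1))
      atTop (nhds 0)) :
    ∀ f : ℝ → ℝ, ContinuousOn f (Set.Icc (0:ℝ) 1) →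
      Tendsto (fun n : ℕ => (1 / ((n : ℝ) + 1)) * ∑ k ∈ Finset.range (n+1), f (α n k))
        atTop (nhds (∫ x in (0:ℝ)..1, f x)) := by
  intro f hf
  obtain ⟨M0, hM0⟩ := isCompact_Icc.exists_bound_of_continuousOn hf
  set M : ℝ := max M0 1 with hMdef
  have hM1 : (1:ℝ) ≤ M := le_max_right _ _
  have hMpos : (0:ℝ) < M := lt_of_lt_of_le one_pos hM1
  have hMb : ∀ x ∈ Set.Icc (0:ℝ) 1, |f x| ≤ M := fun x hx =>
    (hM0 x hx).trans (le_max_left _ _)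
  have hfi : IntervalIntegrable f MeasureTheory.volume 0 1 := by
    apply ContinuousOn.intervalIntegrable
    rwa [Set.uIcc_of_le zero_le_one]
  have hunif := isCompact_Icc.uniformContinuousOn_of_continuous hf
  rw [Metric.uniformContinuousOn_iff] at hunif
  rw [Metric.tendsto_atTop]
  intro ε hε
  obtain ⟨δ, hδ, hδf⟩ := hunif (ε/4) (by positivity)
  set C : ℝ := 2*M/δ with hCdef
  have hCpos : 0 < C := by positivity
  have hev : ∀ᶠ n in atTop,
      sSup ((fun p => ∑ k ∈ Finset.range (n+1),
        (n.choose k : ℝ) * p ^ k * (1 - p) ^ (n - k) * |p - α n k|) '' Set.Icc (0:ℝ) 1)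
        < ε/(4*C) :=
    hnorm.eventually (gt_mem_nhds (show (0:ℝ) < ε/(4*C) by positivity))
  obtain ⟨N, hN⟩ := eventually_atTop.mp hev
  refine ⟨N, fun n hn => ?_⟩
  set S : ℝ := sSup ((fun p => ∑ k ∈ Finset.range (n+1),
      (n.choose k : ℝ) * p ^ k * (1 - p) ^ (n - k) * |p - α n k|) '' Set.Icc (0:ℝ) 1)
    with hSdef
  have hSlt : S < ε/(4*C) := hN n hn
  have hα : ∀ k ∈ Finset.range (n+1), α n k ∈ Set.Icc (0:ℝ) 1 :=
    fun k hk => hmem n k (Nat.lt_succ_iff.mp (Finset.mem_range.mp hk))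
  -- pointwise modulus bound
  have hflip : ∀ x ∈ Set.Icc (0:ℝ) 1, ∀ y ∈ Set.Icc (0:ℝ) 1,
      |f x - f y| ≤ ε/4 + C * |x - y| := by
    intro x hx y hy
    by_cases h : dist x y < δ
    · have h1 : |f x - f y| ≤ ε/4 := by
        have := le_of_lt (hδf x hx y hy h)
        rwa [Real.dist_eq] at this
      nlinarith [abs_nonneg (x - y)]
    · push_neg at h
      rw [Real.dist_eq] at h
      have h2M : |f x - f y| ≤ 2*M := by
        have hx' := hMb x hx
        have hy' := hMb y hy
        have := abs_sub (f x) (f y)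
        linarith
      have h3 : 2*M ≤ C * |x-y| := by
        have : 2*M = 2*M/δ * δ := by field_simp
        rw [this, hCdef]
        exact mul_le_mul_of_nonneg_left h (by positivity)
      linarith
  -- continuity of D_n, sSup bound
  have hDcont : ContinuousOn (fun p : ℝ => ∑ k ∈ Finset.range (n+1),
      (n.choose k : ℝ) * p ^ k * (1 - p) ^ (n - k) * |p - α n k|) (Set.Icc 0 1) := by
    apply Continuous.continuousOn
    apply continuous_finset_sum
    intro k _
    exact (((continuous_const.mul (continuous_pow k)).mul
      ((continuous_const.sub continuous_id).pow _)).mul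
      ((continuous_id.sub continuous_const).abs))
  have hbdd : BddAbove ((fun p : ℝ => ∑ k ∈ Finset.range (n+1),
      (n.choose k : ℝ) * p ^ k * (1 - p) ^ (n - k) * |p - α n k|) '' Set.Icc (0:ℝ) 1) :=
    (isCompact_Icc.image_of_continuousOn hDcont).bddAbove
  have hD : ∀ p ∈ Set.Icc (0:ℝ) 1,
      (∑ k ∈ Finset.range (n+1),
        (n.choose k : ℝ) * p ^ k * (1 - p) ^ (n - k) * |p - α n k|) ≤ S :=
    fun p hp => le_csSup hbdd ⟨p, hp, rfl⟩
  -- the key pointwise estimate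
  have hest : ∀ p ∈ Set.Icc (0:ℝ) 1,
      |(∑ k ∈ Finset.range (n+1),
          (n.choose k : ℝ) * p ^ k * (1 - p) ^ (n - k) * f (α n k)) - f p|
        ≤ ε/4 + C * S := by
    intro p hp
    have hBnn : ∀ k ∈ Finset.range (n+1),
        (0:ℝ) ≤ (n.choose k : ℝ) * p ^ k * (1 - p) ^ (n - k) := by
      intro k _
      exact mul_nonneg (mul_nonneg (Nat.cast_nonneg _) (pow_nonneg hp.1 _))
        (pow_nonneg (by linarith [hp.2]) _)
    have hBsum : ∑ k ∈ Finset.range (n+1),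
        (n.choose k : ℝ) * p ^ k * (1 - p) ^ (n - k) = 1 := by
      calc ∑ k ∈ Finset.range (n+1), (n.choose k : ℝ) * p ^ k * (1 - p) ^ (n - k)
          = (p + (1-p))^n := by
            rw [add_pow]; exact Finset.sum_congr rfl fun k _ => by ring
        _ = 1 := by norm_num
    have hrw : (∑ k ∈ Finset.range (n+1),
          (n.choose k : ℝ) * p ^ k * (1 - p) ^ (n - k) * f (α n k)) - f p
        = ∑ k ∈ Finset.range (n+1),
          (n.choose k : ℝ) * p ^ k * (1 - p) ^ (n - k) * (f (α n k) - f p) := by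
      simp only [mul_sub, Finset.sum_sub_distrib, ← Finset.sum_mul, hBsum, one_mul]
    rw [hrw]
    calc |∑ k ∈ Finset.range (n+1),
          (n.choose k : ℝ) * p ^ k * (1 - p) ^ (n - k) * (f (α n k) - f p)|
        ≤ ∑ k ∈ Finset.range (n+1),
          (n.choose k : ℝ) * p ^ k * (1 - p) ^ (n - k) * |f (α n k) - f p| := by
          refine (Finset.abs_sum_le_sum_abs _ _).trans (le_of_eq ?_)
          exact Finset.sum_congr rfl fun k hk => by
            rw [abs_mul, abs_of_nonneg (hBnn k hk)]
      _ ≤ ∑ k ∈ Finset.range (n+1),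
          (n.choose k : ℝ) * p ^ k * (1 - p) ^ (n - k) * (ε/4 + C * |p - α n k|) := by
          refine Finset.sum_le_sum fun k hk => ?_
          refine mul_le_mul_of_nonneg_left ?_ (hBnn k hk)
          have h := hflip (α n k) (hα k hk) p hp
          rwa [abs_sub_comm (α n k) p] at h
      _ = ε/4 * (∑ k ∈ Finset.range (n+1),
            (n.choose k : ℝ) * p ^ k * (1 - p) ^ (n - k))
          + C * ∑ k ∈ Finset.range (n+1),
            (n.choose k : ℝ) * p ^ k * (1 - p) ^ (n - k) * |p - α n k| := by
          rw [Finset.mul_sum, Finset.mul_sum, ← Finset.sum_add_distrib]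
          exact Finset.sum_congr rfl fun k _ => by ring
      _ ≤ ε/4 + C * S := by
          rw [hBsum, mul_one]
          have := hD p hp
          nlinarith
  -- integral identity
  have hInt1 : ∀ k ∈ Finset.range (n+1), IntervalIntegrable
      (fun p : ℝ => (n.choose k : ℝ) * p ^ k * (1 - p) ^ (n - k) * f (α n k))
      MeasureTheory.volume 0 1 := by
    intro k _
    apply Continuous.intervalIntegrable
    exact ((continuous_const.mul (continuous_pow k)).mul
      ((continuous_const.sub continuous_id).pow _)).mul continuous_const
  have hSumCont : Continuous (fun p : ℝ => ∑ k ∈ Finset.range (n+1),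
      (n.choose k : ℝ) * p ^ k * (1 - p) ^ (n - k) * f (α n k)) := by
    apply continuous_finset_sum
    intro k _
    exact ((continuous_const.mul (continuous_pow k)).mul
      ((continuous_const.sub continuous_id).pow _)).mul continuous_const
  have hmain : (∫ p in (0:ℝ)..1, ∑ k ∈ Finset.range (n+1),
        (n.choose k : ℝ) * p ^ k * (1 - p) ^ (n - k) * f (α n k))
      = (1 / ((n:ℝ) + 1)) * ∑ k ∈ Finset.range (n+1), f (α n k) := by
    rw [intervalIntegral.integral_finset_sum hInt1, Finset.mul_sum]
    refine Finset.sum_congr rfl fun k hk => ?_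
    rw [intervalIntegral.integral_mul_const,
      beta_choose n k (Nat.lt_succ_iff.mp (Finset.mem_range.mp hk))]
  have hdiff : (1 / ((n:ℝ) + 1)) * (∑ k ∈ Finset.range (n+1), f (α n k))
        - (∫ x in (0:ℝ)..1, f x)
      = ∫ p in (0:ℝ)..1, ((∑ k ∈ Finset.range (n+1),
          (n.choose k : ℝ) * p ^ k * (1 - p) ^ (n - k) * f (α n k)) - f p) := by
    rw [intervalIntegral.integral_sub (hSumCont.intervalIntegrable 0 1) hfi, hmain]
  rw [Real.dist_eq, hdiff]
  have hbound := intervalIntegral.norm_integral_le_of_norm_le_const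
    (C := ε/4 + C * S) (f := fun p : ℝ => (∑ k ∈ Finset.range (n+1),
      (n.choose k : ℝ) * p ^ k * (1 - p) ^ (n - k) * f (α n k)) - f p)
    (a := 0) (b := 1) ?_
  · have hCS : C * S < ε/4 := by
      have := (mul_lt_mul_of_pos_left hSlt hCpos)
      calc C * S < C * (ε/(4*C)) := this
        _ = ε/4 := by field_simp
    calc |∫ p in (0:ℝ)..1, ((∑ k ∈ Finset.range (n+1),
          (n.choose k : ℝ) * p ^ k * (1 - p) ^ (n - k) * f (α n k)) - f p)|
        ≤ (ε/4 + C * S) * |1 - 0| := hbound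
      _ = ε/4 + C * S := by norm_num
      _ < ε := by linarith
  · intro x hx
    rw [Set.uIoc_of_le zero_le_one] at hx
    rw [Real.norm_eq_abs]
    exact hest x (Set.Ioc_subset_Icc_self hx)
end

section
/- Suppose K_n are ordered node sets in [0,1] with \|D(K_n;\cdot)\|_\infty \to 0. Then for every p in (0,1), \limsup_{n\to\infty} |K_n \cap [0,p]|/(n+1) \le p and \liminf_{n\to\infty} |K_n \cap [0,p]|/(n+1) \ge p. -/
open Finset Filter

noncomputable def bb (n k : ℕ) (p : ℝ) : ℝ := (n.choose k : ℝ) * p ^ k * (1 - p) ^ (n - k)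

lemma bb_nonneg {n k : ℕ} {p : ℝ} (h0 : 0 ≤ p) (h1 : p ≤ 1) : 0 ≤ bb n k p := by
  unfold bb; have : 0 ≤ 1 - p := by linarith
  positivity

lemma bb_sum (n : ℕ) (p : ℝ) : ∑ k ∈ Finset.range (n+1), bb n k p = 1 := by
  have := add_pow p (1 - p) n
  simp only [add_sub_cancel, one_pow] at this
  rw [this]; unfold bb
  exact Finset.sum_congr rfl fun k _ => by ring

lemma bb_variance (n : ℕ) (p : ℝ) :
    ∑ k ∈ Finset.range (n+1), ((n : ℝ) * p - k) ^ 2 * bb n k p = n * p * (1 - p) := by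
  have := bernsteinPolynomial.variance ℝ n
  apply_fun fun q => Polynomial.aeval p q at this
  simp only [map_sum, map_mul, map_pow, map_sub, map_nsmul, Polynomial.aeval_X,
    Polynomial.aeval_natCast, nsmul_eq_mul, map_one, map_sub] at this
  rw [← this]
  apply Finset.sum_congr rfl
  intro k _
  congr 1
  unfold bb bernsteinPolynomial
  simp [map_mul, map_pow, map_sub]

lemma bb_cheb {n : ℕ} (hn : 1 ≤ n) {p δ : ℝ} (h0 : 0 ≤ p) (h1 : p ≤ 1) (hδ : 0 < δ) :
    ∑ k ∈ (Finset.range (n+1)).filter (fun k : ℕ => δ * n ≤ |(k : ℝ) - n * p|), bb n k p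
      ≤ 1 / (4 * δ ^ 2 * n) := by
  have hn' : (0:ℝ) < n := by exact_mod_cast hn
  have hpos : (0:ℝ) < (δ * n) ^ 2 := by positivity
  calc ∑ k ∈ (Finset.range (n+1)).filter (fun k : ℕ => δ * n ≤ |(k : ℝ) - n * p|), bb n k p
      ≤ ∑ k ∈ (Finset.range (n+1)).filter (fun k : ℕ => δ * n ≤ |(k : ℝ) - n * p|),
          (((n:ℝ) * p - k) ^ 2 / (δ * n) ^ 2) * bb n k p := by
        apply Finset.sum_le_sum
        intro k hk
        simp only [Finset.mem_filter] at hk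
        have h2 : (δ * n) ^ 2 ≤ ((n:ℝ) * p - k) ^ 2 := by
          rw [← sq_abs ((n:ℝ) * p - k)]
          apply pow_le_pow_left₀ (by positivity)
          rw [abs_sub_comm]; exact hk.2
        have hb := bb_nonneg (n := n) (k := k) h0 h1
        have h3 : (1:ℝ) ≤ ((n:ℝ) * p - k) ^ 2 / (δ * n) ^ 2 := (one_le_div hpos).mpr h2
        exact le_mul_of_one_le_left hb h3
    _ ≤ ∑ k ∈ Finset.range (n+1), (((n:ℝ) * p - k) ^ 2 / (δ * n) ^ 2) * bb n k p := by
        apply Finset.sum_le_sum_of_subset_of_nonneg (Finset.filter_subset _ _)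
        intro k _ _
        have hb := bb_nonneg (n := n) (k := k) h0 h1
        positivity
    _ = (n * p * (1 - p)) / (δ * n) ^ 2 := by
        rw [← bb_variance n p, Finset.sum_div]
        exact Finset.sum_congr rfl fun k _ => by ring
    _ ≤ 1 / (4 * δ ^ 2 * n) := by
        rw [div_le_div_iff₀ hpos (by positivity)]
        nlinarith [sq_nonneg (1 - 2*p), sq_nonneg δ, mul_pos hn' hn']

lemma D_lower {n : ℕ} (hn : 1 ≤ n) {q δ c : ℝ} (h0 : 0 ≤ q) (h1 : q ≤ 1) (hδ : 0 < δ)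
    (hc : 0 ≤ c) (g : ℕ → ℝ)
    (hg : ∀ k, k ∈ Finset.range (n+1) → |(k:ℝ) - n * q| < δ * n → c ≤ |q - g k|) :
    c * (1 - 1 / (4 * δ ^ 2 * n)) ≤ ∑ k ∈ Finset.range (n+1), bb n k q * |q - g k| := by
  have hcentral : 1 - 1 / (4 * δ ^ 2 * n) ≤
      ∑ k ∈ (Finset.range (n+1)).filter (fun k : ℕ => ¬ (δ * n ≤ |(k : ℝ) - n * q|)), bb n k q := by
    have hsplit := Finset.sum_filter_add_sum_filter_not (Finset.range (n+1))
      (fun k : ℕ => δ * n ≤ |(k : ℝ) - n * q|) (fun k => bb n k q)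
    rw [bb_sum n q] at hsplit
    have := bb_cheb hn h0 h1 hδ
    linarith
  calc c * (1 - 1 / (4 * δ ^ 2 * n)) ≤ c *
        ∑ k ∈ (Finset.range (n+1)).filter (fun k : ℕ => ¬ (δ * n ≤ |(k : ℝ) - n * q|)), bb n k q :=
        mul_le_mul_of_nonneg_left hcentral hc
    _ = ∑ k ∈ (Finset.range (n+1)).filter (fun k : ℕ => ¬ (δ * n ≤ |(k : ℝ) - n * q|)),
          bb n k q * c := by rw [Finset.mul_sum]; exact Finset.sum_congr rfl fun k _ => by ring
    _ ≤ ∑ k ∈ (Finset.range (n+1)).filter (fun k : ℕ => ¬ (δ * n ≤ |(k : ℝ) - n * q|)),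
          bb n k q * |q - g k| := by
        apply Finset.sum_le_sum
        intro k hk
        simp only [Finset.mem_filter, not_le] at hk
        exact mul_le_mul_of_nonneg_left (hg k hk.1 hk.2) (bb_nonneg h0 h1)
    _ ≤ ∑ k ∈ Finset.range (n+1), bb n k q * |q - g k| := by
        apply Finset.sum_le_sum_of_subset_of_nonneg (Finset.filter_subset _ _)
        intro k _ _
        exact mul_nonneg (bb_nonneg h0 h1) (abs_nonneg _)

lemma D_le_sSup (n : ℕ) (g : ℕ → ℝ) {q : ℝ} (hq : q ∈ Set.Icc (0:ℝ) 1) :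
    ∑ k ∈ Finset.range (n+1), (n.choose k : ℝ) * q ^ k * (1 - q) ^ (n - k) * |q - g k| ≤
      sSup ((fun p => ∑ k ∈ Finset.range (n+1),
        (n.choose k : ℝ) * p ^ k * (1 - p) ^ (n - k) * |p - g k|) '' Set.Icc (0:ℝ) 1) := by
  apply le_csSup
  · apply IsCompact.bddAbove_image isCompact_Icc
    apply Continuous.continuousOn
    apply continuous_finset_sum
    intro k _
    exact ((continuous_const.mul (continuous_pow k)).mul
      ((continuous_const.sub continuous_id).pow (n-k))).mul ((continuous_id.sub continuous_const).abs)
  · exact Set.mem_image_of_mem _ hq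

lemma filter_eq_range {n : ℕ} {p : ℝ} (g : ℕ → ℝ) (hord : ∀ j k, j ≤ k → k ≤ n → g j ≤ g k) :
    (Finset.range (n+1)).filter (fun k => g k ≤ p) =
      Finset.range (((Finset.range (n+1)).filter (fun k => g k ≤ p)).card) := by
  set S := (Finset.range (n+1)).filter (fun k => g k ≤ p) with hS
  have hsub : S ⊆ Finset.range S.card := by
    intro k hk
    simp only [Finset.mem_range]
    have hk' := hk
    simp only [hS, Finset.mem_filter, Finset.mem_range] at hk'
    have hrsub : Finset.range (k+1) ⊆ S := by
      intro j hj
      simp only [Finset.mem_range] at hj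
      simp only [hS, Finset.mem_filter, Finset.mem_range]
      exact ⟨by omega, le_trans (hord j k (by omega) (by omega)) hk'.2⟩
    have := Finset.card_le_card hrsub
    simpa using this
  have := Finset.eq_of_subset_of_card_le hsub (by simp)
  exact this

set_option maxHeartbeats 1000000 in
theorem stmt_9 (α : ℕ → ℕ → ℝ)
    (hmem : ∀ n, ∀ k ≤ n, α n k ∈ Set.Icc (0:ℝ) 1)
    (hord : ∀ n, ∀ j k, j ≤ k → k ≤ n → α n j ≤ α n k)
    (hnorm : Tendsto
      (fun n => sSup ((fun p => ∑ k ∈ Finset.range (n+1),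
        (n.choose k : ℝ) * p ^ k * (1 - p) ^ (n - k) * |p - α n k|) '' Set.Icc (0:ℝ) 1))
      atTop (nhds 0)) :
    ∀ p ∈ Set.Ioo (0:ℝ) 1,
      limsup (fun n =>
        (((Finset.range (n+1)).filter (fun k => α n k ≤ p)).card : ℝ) / (n + 1)) atTop ≤ p ∧
      p ≤ liminf (fun n =>
        (((Finset.range (n+1)).filter (fun k => α n k ≤ p)).card : ℝ) / (n + 1)) atTop := by
  intro p hp
  obtain ⟨hp0, hp1⟩ := hp
  set N : ℕ → ℕ := fun n => (((Finset.range (n+1)).filter (fun k => α n k ≤ p)).card) with hN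
  have hf : Tendsto (fun n => ((N n : ℝ)) / (n + 1)) atTop (nhds p) := by
    rw [Metric.tendsto_nhds]
    intro ε hε
    set ε' : ℝ := min ε (min p (1 - p)) / 2 with hε'
    have hε'pos : 0 < ε' := by
      have : 0 < min ε (min p (1 - p)) := lt_min hε (lt_min hp0 (by linarith))
      positivity
    have hε'ε : ε' < ε := by
      have h1 : min ε (min p (1 - p)) ≤ ε := min_le_left _ _
      linarith
    have hε'p : ε' < p := by
      have h1 : min ε (min p (1 - p)) ≤ p := le_trans (min_le_right _ _) (min_le_left _ _)
      linarith
    have hε'1p : ε' < 1 - p := by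
      have h1 : min ε (min p (1 - p)) ≤ 1 - p := le_trans (min_le_right _ _) (min_le_right _ _)
      linarith
    set δ : ℝ := ε' / 4 with hδ
    have hδpos : 0 < δ := by positivity
    have hsupev : ∀ᶠ n in atTop, sSup ((fun q => ∑ k ∈ Finset.range (n+1),
        (n.choose k : ℝ) * q ^ k * (1 - q) ^ (n - k) * |q - α n k|) '' Set.Icc (0:ℝ) 1)
          < ε' / 8 := hnorm.eventually (gt_mem_nhds (by positivity))
    have hn1ev : ∀ᶠ n : ℕ in atTop, (1:ℝ) ≤ n :=
      tendsto_natCast_atTop_atTop.eventually_ge_atTop 1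
    have hn2ev : ∀ᶠ n : ℕ in atTop, 1 / (2 * δ ^ 2) ≤ (n:ℝ) :=
      tendsto_natCast_atTop_atTop.eventually_ge_atTop _
    have hn3ev : ∀ᶠ n : ℕ in atTop, 4 * p / ε' ≤ (n:ℝ) :=
      tendsto_natCast_atTop_atTop.eventually_ge_atTop _
    filter_upwards [hsupev, hn1ev, hn2ev, hn3ev] with n hsup hn1 hn2 hn3
    have hnn : 1 ≤ n := by exact_mod_cast hn1
    have hnpos : (0:ℝ) < n := by linarith
    have hn1pos : (0:ℝ) < (n:ℝ) + 1 := by linarith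
    have htail : 1 / (4 * δ ^ 2 * n) ≤ 1 / 2 := by
      have h1 : 1 ≤ (n:ℝ) * (2 * δ ^ 2) := (div_le_iff₀ (by positivity)).mp hn2
      rw [div_le_div_iff₀ (by positivity) (by norm_num)]
      nlinarith
    -- the key characterization: k < N n ↔ k ≤ n ∧ α n k ≤ p
    have hrange := filter_eq_range (n := n) (p := p) (α n) (hord n)
    have hlt : ∀ k, k < N n → α n k ≤ p := by
      intro k hk
      have : k ∈ Finset.range (N n) := Finset.mem_range.mpr hk
      rw [hN, ← hrange] at this
      exact (Finset.mem_filter.mp this).2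
    have hgt : ∀ k, k ≤ n → N n ≤ k → p < α n k := by
      intro k hkn hk
      by_contra h
      push_neg at h
      have : k ∈ (Finset.range (n+1)).filter (fun k => α n k ≤ p) :=
        Finset.mem_filter.mpr ⟨Finset.mem_range.mpr (by omega), h⟩
      rw [hrange] at this
      exact absurd (Finset.mem_range.mp this) (not_lt.mpr hk)
    rw [Real.dist_eq, abs_sub_lt_iff]
    constructor
    · -- upper bound : N n / (n+1) - p < ε
      by_contra h
      push_neg at h
      have hNbig : (p + ε') * (n + 1) ≤ (N n : ℝ) := by
        have h2 : p + ε' ≤ (N n : ℝ) / (n+1) := by linarith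
        calc (p + ε') * (n + 1) ≤ ((N n : ℝ) / (n+1)) * (n+1) :=
              mul_le_mul_of_nonneg_right h2 hn1pos.le
          _ = (N n : ℝ) := by field_simp
      set q : ℝ := p + ε' / 2 with hq
      have hq0 : 0 ≤ q := by simp only [hq]; linarith
      have hq1 : q ≤ 1 := by simp only [hq]; linarith
      have hkey : ∀ k, k ∈ Finset.range (n+1) → |(k:ℝ) - n * q| < δ * n → ε' / 2 ≤ |q - α n k| := by
        intro k hkmem hkcl
        have hkub : (k:ℝ) < n * q + δ * n := by
          have := abs_lt.mp hkcl
          linarith [this.1, this.2]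
        have hkN : (k:ℝ) < (N n : ℝ) := by
          calc (k:ℝ) < n * q + δ * n := hkub
            _ = n * (p + 3 * ε' / 4) := by rw [hq, hδ]; ring
            _ ≤ (p + ε') * (n + 1) := by
                have hne : 0 ≤ (n:ℝ) * ε' := mul_nonneg hnpos.le hε'pos.le
                nlinarith
            _ ≤ (N n : ℝ) := hNbig
        have : α n k ≤ p := hlt k (Nat.cast_lt.mp hkN)
        rw [abs_of_nonneg (by simp only [hq]; linarith)]
        simp only [hq]; linarith
      have hD := D_lower hnn hq0 hq1 hδpos (by positivity) (α n) hkey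
      have hDle := D_le_sSup n (α n) (Set.mem_Icc.mpr ⟨hq0, hq1⟩)
      have hbbsum : ∑ k ∈ Finset.range (n+1), bb n k q * |q - α n k| =
          ∑ k ∈ Finset.range (n+1), (n.choose k : ℝ) * q ^ k * (1 - q) ^ (n - k) * |q - α n k| :=
        Finset.sum_congr rfl fun k _ => by unfold bb; ring
      rw [hbbsum] at hD
      have : ε' / 4 ≤ ∑ k ∈ Finset.range (n+1),
          (n.choose k : ℝ) * q ^ k * (1 - q) ^ (n - k) * |q - α n k| := by
        calc ε' / 4 = (ε' / 2) * (1 / 2) := by ring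
          _ ≤ (ε' / 2) * (1 - 1 / (4 * δ ^ 2 * n)) :=
              mul_le_mul_of_nonneg_left (by linarith) (by positivity)
          _ ≤ _ := hD
      linarith [lt_of_le_of_lt hDle hsup]
    · -- lower bound : p - N n / (n+1) < ε
      by_contra h
      push_neg at h
      have hNsmall : (N n : ℝ) ≤ (p - ε') * (n + 1) := by
        have h2 : (N n : ℝ) / (n+1) ≤ p - ε' := by linarith
        calc (N n : ℝ) = ((N n : ℝ) / (n+1)) * (n+1) := by field_simp
          _ ≤ (p - ε') * (n + 1) := mul_le_mul_of_nonneg_right h2 hn1pos.le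
      set q : ℝ := p - ε' / 2 with hq
      have hq0 : 0 ≤ q := by simp only [hq]; linarith
      have hq1 : q ≤ 1 := by simp only [hq]; linarith
      have hkey : ∀ k, k ∈ Finset.range (n+1) → |(k:ℝ) - n * q| < δ * n → ε' / 2 ≤ |q - α n k| := by
        intro k hkmem hkcl
        have hklb : n * q - δ * n < (k:ℝ) := by
          have := abs_lt.mp hkcl
          linarith [this.1]
        have hNk : (N n : ℝ) < (k:ℝ) := by
          calc (N n : ℝ) ≤ (p - ε') * (n + 1) := hNsmall
            _ ≤ n * (p - 3 * ε' / 4) := by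
                have h4 : 4 * p ≤ (n:ℝ) * ε' := (div_le_iff₀ hε'pos).mp hn3
                nlinarith
            _ = n * q - δ * n := by rw [hq, hδ]; ring
            _ < (k:ℝ) := hklb
        have hNk' : N n ≤ k := (Nat.cast_lt.mp hNk).le
        have : p < α n k := hgt k (by
          have := Finset.mem_range.mp hkmem; omega) hNk'
        rw [abs_sub_comm, abs_of_nonneg (by simp only [hq]; linarith)]
        simp only [hq]; linarith
      have hD := D_lower hnn hq0 hq1 hδpos (by positivity) (α n) hkey
      have hDle := D_le_sSup n (α n) (Set.mem_Icc.mpr ⟨hq0, hq1⟩)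
      have hbbsum : ∑ k ∈ Finset.range (n+1), bb n k q * |q - α n k| =
          ∑ k ∈ Finset.range (n+1), (n.choose k : ℝ) * q ^ k * (1 - q) ^ (n - k) * |q - α n k| :=
        Finset.sum_congr rfl fun k _ => by unfold bb; ring
      rw [hbbsum] at hD
      have : ε' / 4 ≤ ∑ k ∈ Finset.range (n+1),
          (n.choose k : ℝ) * q ^ k * (1 - q) ^ (n - k) * |q - α n k| := by
        calc ε' / 4 = (ε' / 2) * (1 / 2) := by ring
          _ ≤ (ε' / 2) * (1 - 1 / (4 * δ ^ 2 * n)) :=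
              mul_le_mul_of_nonneg_left (by linarith) (by positivity)
          _ ≤ _ := hD
      linarith [lt_of_le_of_lt hDle hsup]
  exact ⟨le_of_eq hf.limsup_eq, le_of_eq hf.liminf_eq.symm⟩
end

section
/- If q \in (0,1), n is a positive integer, and k is an integer with k - qn > q (equivalently k > q(n+1)), then \sum_{\ell=0}^{k} \binom{n}{\ell} q^\ell (1-q)^{n-\ell} > 1/2. -/
open Finset

noncomputable def Ufun (n : ℕ) (x : ℝ) : ℕ → ℝ
  | 0 => 0
  | (j+1) => ((n-1).choose j : ℝ) * x^j * (1-x)^(n-1-j)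

lemma term_deriv (n : ℕ) (hn : 0 < n) (l : ℕ) (hl : l ≤ n - 1) (x : ℝ) :
    HasDerivAt (fun y : ℝ => (n.choose l : ℝ) * (y^l * (1-y)^(n-l)))
      ((n:ℝ) * (Ufun n x l - Ufun n x (l+1))) x := by
  obtain ⟨n', rfl⟩ : ∃ n', n = n'+1 := ⟨n-1, by omega⟩
  have h1 : HasDerivAt (fun y : ℝ => y^l) ((l:ℝ) * x^(l-1)) x := hasDerivAt_pow l x
  have hin : HasDerivAt (fun y : ℝ => 1 - y) (-1) x := by
    simpa using (hasDerivAt_id x).const_sub (1:ℝ)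
  have h2 : HasDerivAt (fun y : ℝ => (1-y)^(n'+1-l))
      (((n'+1-l : ℕ):ℝ) * (1-x)^(n'+1-l-1) * (-1)) x :=
    (hasDerivAt_pow (n'+1-l) (1-x)).comp x hin
  have h3 := (h1.mul h2).const_mul (((n'+1).choose l : ℝ))
  refine h3.congr_deriv (Eq.symm ?_)
  rcases l with _ | j
  · simp only [Ufun, Nat.choose_zero_right, Nat.cast_one, pow_zero, Nat.add_sub_cancel,
      Nat.cast_zero, one_mul, Nat.sub_zero]
    push_cast
    ring
  · obtain ⟨d, rfl⟩ : ∃ d, n' = j+1+d := ⟨n' - (j+1), by omega⟩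
    have e1 : ((j+1+d+1).choose (j+1) : ℝ) * (j+1) = ((j+1+d+1):ℝ) * ((j+1+d).choose j) := by
      exact_mod_cast congrArg (Nat.cast (R := ℝ)) (Nat.add_one_mul_choose_eq (j+1+d) j).symm
    have e2 : ((j+1+d+1).choose (j+1) : ℝ) * (d+1 : ℝ) = ((j+1+d+1):ℝ) * ((j+1+d).choose (j+1)) := by
      have h4 := Nat.choose_succ_right_eq (j+1+d+1) (j+1)
      have h5 := Nat.add_one_mul_choose_eq (j+1+d) (j+1)
      have h6 : (j+1+d+1) * ((j+1+d).choose (j+1)) = (j+1+d+1).choose (j+1) * (d+1) := by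
        rw [h5]
        convert h4 using 2
        omega
      have := congrArg (Nat.cast (R := ℝ)) h6
      push_cast at this
      linarith [this]
    simp only [Ufun, Nat.add_sub_cancel]
    have E1 : j+1+d+1-(j+1) = d+1 := by omega
    have E2 : j+1+d+1-(j+1)-1 = d := by omega
    have E3 : j+1+d-j = d+1 := by omega
    have E4 : j+1+d-(j+1) = d := by omega
    simp only [E2, E1, E3, E4, Nat.add_sub_cancel]
    push_cast
    linear_combination (x^(j+1)*(1-x)^d) * e2 - (x^j*(1-x)^(d+1)) * e1


lemma polyA (a b t N : ℝ) (ha : 1 ≤ a) (hab : a ≤ b+1) (hb : 0 ≤ b)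
    (hN : N = a + b + 2) (ht : 0 < t) (hts : t*N < a) :
    b*(b+2)*(t*(2*a-t*N)) ≤ a^2*((N-2*a+t*N)*(1-t)) := by
  have hN0 : 0 < N := by nlinarith
  have key : N*(a^2*((N-2*a+t*N)*(1-t)) - b*(b+2)*(t*(2*a-t*N)))
      = a^2*(2*b+4) - (a-t*N)^2*(a^2-b*(b+2)) := by subst hN; ring
  have htN : 0 < t*N := mul_pos ht hN0
  have h4 : (a-t*N)^2 ≤ a^2 := by nlinarith
  have h5 : (a-t*N)^2*(a^2-b*(b+2)) ≤ a^2*(2*b+4) := by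
    rcases le_or_gt (a^2-b*(b+2)) 0 with h | h
    · nlinarith
    · have ha2 : a^2 ≤ (b+2)^2 := by nlinarith
      calc (a-t*N)^2*(a^2-b*(b+2)) ≤ a^2*(a^2-b*(b+2)) := by nlinarith
        _ ≤ a^2*(2*b+4) := by nlinarith
  nlinarith

lemma polyB (a b x N : ℝ) (hab : b+2 ≤ a) (hb : 0 ≤ b)
    (hN : N = a + b + 2) (hx : 0 < x) (hxs : x*N < a) :
    N*(a^2-(b+2)^2)*(x*(1-x)) < (a-b)*((b+2)^2*x + a^2*(1-x)) := by
  have hN0 : 0 < N := by nlinarith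
  have key : N*((a-b)*((b+2)^2*x + a^2*(1-x)) - N*(a^2-(b+2)^2)*(x*(1-x)))
      = 2*a*(b+2)*N + (a-x*N)*(a^2-(b+2)^2)*(a+2-x*N) := by subst hN; ring
  have h1 : 0 ≤ (a-x*N)*(a^2-(b+2)^2)*(a+2-x*N) := by
    have h0 : 0 ≤ a - x*N := by linarith
    have h2 : 0 ≤ a^2-(b+2)^2 := by nlinarith
    have h3 : 0 ≤ a+2-x*N := by nlinarith
    positivity
  have h6 : 0 < 2*a*(b+2)*N :=
    mul_pos (mul_pos (by linarith : (0:ℝ) < 2*a) (by linarith : (0:ℝ) < b+2)) hN0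
  nlinarith

-- case A fraction lemma
lemma fracA (a b t s N : ℝ) (hN : N = a+b+2) (hsN : s*N = a) (hN0 : 0 < N)
    (ha : 1 ≤ a) (hab : a ≤ b+1) (hb : 0 ≤ b)
    (ht : 0 < t) (hts : t < s)
    (hp1 : 0 < 2*s-t) (hp2 : 0 < 1-(2*s-t)) (hp3 : 0 < 1-t) :
    b/(1-(2*s-t)) + b/(1-t) ≤ a/(2*s-t) + a/t := by
  have htN : t*N < a := by nlinarith
  have hΔ := polyA a b t N ha hab hb hN ht htN
  set G := (a*t + a*(2*s-t)) * ((1-(2*s-t))*(1-t)) - (b*(1-t) + b*(1-(2*s-t))) * ((2*s-t)*t) with hG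
  have e : N^2 * G = 2*(a^2*((N-2*a+t*N)*(1-t)) - b*(b+2)*(t*(2*a-t*N)))
      + (s*N - a) * (2*a*(1-t)*(N+t*N-2*(s*N)-2*a) - 2*b*t*(2*N-2*(s*N)-2*a+t*N)) := by
    rw [hG, hN]; ring
  rw [hsN, sub_self, zero_mul, add_zero] at e
  have hG0 : 0 ≤ G := by
    have h2 : 0 ≤ N^2 * G := by rw [e]; linarith
    have hN2 : (0:ℝ) < N^2 := by positivity
    exact le_of_mul_le_mul_left (by simpa using h2) hN2
  rw [div_add_div _ _ hp2.ne' hp3.ne', div_add_div _ _ hp1.ne' ht.ne',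
    div_le_div_iff₀ (mul_pos hp2 hp3) (mul_pos hp1 ht)]
  nlinarith [hG0]

-- pointwise reflection inequality, case A
lemma pointA (k m : ℕ) (hk1 : 1 ≤ k) (hkm : k ≤ m+1) (s x : ℝ)
    (hsN : s * ((k:ℝ)+(m:ℝ)+2) = (k:ℝ)) (hx0 : 0 < x) (hxs : x < s) :
    x^k * (1-x)^m ≤ (2*s-x)^k * (1-(2*s-x))^m := by
  set a : ℝ := (k:ℝ) with ha'
  set b : ℝ := (m:ℝ) with hb'
  set N : ℝ := a + b + 2 with hN'
  have ha : 1 ≤ a := by rw [ha']; exact_mod_cast hk1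
  have hab : a ≤ b + 1 := by rw [ha', hb']; exact_mod_cast hkm
  have hb : 0 ≤ b := by rw [hb']; exact Nat.cast_nonneg m
  have hN0 : 0 < N := by simp only [hN']; linarith
  have hs0 : 0 < s := by nlinarith
  have hs12 : 2*s < 1 := by nlinarith
  have hxlt : x < 1 := by linarith
  -- the log-difference function
  set L : ℝ → ℝ := fun t =>
    (a * Real.log (2*s-t) + b * Real.log (1-(2*s-t)))
    - (a * Real.log t + b * Real.log (1-t)) with hL
  have hbounds : ∀ t ∈ Set.Icc x s, 0 < t ∧ 0 < 2*s - t ∧ 0 < 1-(2*s-t) ∧ 0 < 1-t := by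
    intro t htt
    obtain ⟨ht1, ht2⟩ := htt
    refine ⟨by linarith, by linarith, by linarith, by linarith⟩
  have hderiv : ∀ t ∈ Set.Ioo x s, HasDerivAt L
      ((a * (-1/(2*s-t)) + b * (1/(1-(2*s-t)))) - (a * (1/t) + b * (-1/(1-t)))) t := by
    intro t htt
    obtain ⟨ht0, hq1, hq2, hq3⟩ := hbounds t ⟨le_of_lt htt.1, le_of_lt htt.2⟩
    have d1 : HasDerivAt (fun y : ℝ => 2*s - y) (-1) t := by
      simpa using (hasDerivAt_id t).const_sub (2*s)
    have d2 : HasDerivAt (fun y : ℝ => 1 - (2*s - y)) 1 t := by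
      simpa using d1.const_sub (1:ℝ)
    have d3 : HasDerivAt (fun y : ℝ => 1 - y) (-1) t := by
      simpa using (hasDerivAt_id t).const_sub (1:ℝ)
    have l1 : HasDerivAt (fun y : ℝ => Real.log (2*s - y)) (-1/(2*s-t)) t := by
      simpa [div_eq_mul_inv, mul_comm] using d1.log hq1.ne'
    have l2 : HasDerivAt (fun y : ℝ => Real.log (1-(2*s - y))) (1/(1-(2*s-t))) t := by
      simpa [div_eq_mul_inv] using d2.log hq2.ne'
    have l3 : HasDerivAt (fun y : ℝ => Real.log y) (1/t) t := by
      simpa [div_eq_mul_inv] using (hasDerivAt_id t).log ht0.ne'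
    have l4 : HasDerivAt (fun y : ℝ => Real.log (1 - y)) (-1/(1-t)) t := by
      simpa [div_eq_mul_inv, mul_comm] using d3.log hq3.ne'
    exact ((l1.const_mul a).add (l2.const_mul b)).sub ((l3.const_mul a).add (l4.const_mul b))
  have hcont : ContinuousOn L (Set.Icc x s) := by
    apply ContinuousOn.sub
    · apply ContinuousOn.add
      · exact continuousOn_const.mul ((continuousOn_const.sub continuousOn_id).log
          (fun t htt => (hbounds t htt).2.1.ne'))
      · exact continuousOn_const.mul ((continuousOn_const.sub
          (continuousOn_const.sub continuousOn_id)).log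
          (fun t htt => (hbounds t htt).2.2.1.ne'))
    · apply ContinuousOn.add
      · exact continuousOn_const.mul (Real.continuousOn_log.comp continuousOn_id
          (fun t htt => Set.mem_compl_singleton_iff.mpr (hbounds t htt).1.ne'))
      · exact continuousOn_const.mul ((continuousOn_const.sub continuousOn_id).log
          (fun t htt => (hbounds t htt).2.2.2.ne'))
  have hanti : AntitoneOn L (Set.Icc x s) := by
    apply antitoneOn_of_deriv_nonpos (convex_Icc x s) hcont
    · intro t htt
      rw [interior_Icc] at htt
      exact ((hderiv t htt).differentiableAt).differentiableWithinAt
    · intro t htt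
      rw [interior_Icc] at htt
      rw [(hderiv t htt).deriv]
      obtain ⟨ht0, hq1, hq2, hq3⟩ := hbounds t ⟨le_of_lt htt.1, le_of_lt htt.2⟩
      have hfr := fracA a b t s N hN' hsN hN0 ha hab hb ht0 htt.2 hq1 hq2 hq3
      have e1 : a * (-1/(2*s-t)) = -(a/(2*s-t)) := by ring
      have e2 : b * (1/(1-(2*s-t))) = b/(1-(2*s-t)) := by ring
      have e3 : a * (1/t) = a/t := by ring
      have e4 : b * (-1/(1-t)) = -(b/(1-t)) := by ring
      rw [e1, e2, e3, e4]
      linarith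
  have hLs : L s = 0 := by
    simp only [hL]
    have : 2*s - s = s := by ring
    rw [this]
    ring
  have hLx : 0 ≤ L x := by
    have := hanti (Set.left_mem_Icc.mpr (le_of_lt hxs)) (Set.right_mem_Icc.mpr (le_of_lt hxs)) (le_of_lt hxs)
    rw [hLs] at this
    linarith
  -- exponentiate
  have hA : (0:ℝ) < x^k * (1-x)^m := by
    have h1 : (0:ℝ) < 1 - x := by linarith
    positivity
  have hB : (0:ℝ) < (2*s-x)^k * (1-(2*s-x))^m := by
    have h1 : (0:ℝ) < 2*s - x := by linarith
    have h2 : (0:ℝ) < 1-(2*s-x) := by linarith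
    positivity
  rw [← Real.log_le_log_iff hA hB]
  have h1 : (0:ℝ) < 1 - x := by linarith
  have h2 : (0:ℝ) < 2*s - x := by linarith
  have h3 : (0:ℝ) < 1-(2*s-x) := by linarith
  rw [Real.log_mul (by positivity) (by positivity), Real.log_mul (by positivity) (by positivity),
    Real.log_pow, Real.log_pow, Real.log_pow, Real.log_pow]
  simp only [hL] at hLx
  push_cast
  linarith

set_option maxHeartbeats 1000000 in
lemma pointB (k m : ℕ) (hkm : m+2 ≤ k) (s x : ℝ)
    (hsN : s * ((k:ℝ)+(m:ℝ)+2) = (k:ℝ)) (hx0 : 0 < x) (hxs : x < s) :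
    x^(k-m) * (((m:ℝ)+2)^2*x + (k:ℝ)^2*(1-x))^(k+m+2)
      < (k:ℝ)^(2*k+2) * ((m:ℝ)+2)^(2*m+2) * (1-x)^(k-m) := by
  set a : ℝ := (k:ℝ) with ha'
  set b : ℝ := (m:ℝ) with hb'
  set N : ℝ := a + b + 2 with hN'
  have hab : b + 2 ≤ a := by rw [ha', hb']; exact_mod_cast hkm
  have hb : 0 ≤ b := by rw [hb']; exact Nat.cast_nonneg m
  have ha2 : 2 ≤ a := by linarith
  have hN0 : 0 < N := by rw [hN']; linarith
  have hsN2 : s * N = a := by rw [hN']; exact hsN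
  have hs0 : 0 < s := by nlinarith
  have hs1 : s < 1 := by nlinarith
  have hx1 : x < 1 := by linarith
  have hDs : (b+2)^2*s + a^2*(1-s) = a*(b+2) := by
    have h := hsN2
    rw [hN'] at h
    linear_combination ((b+2) - a) * h
  set Gb : ℝ → ℝ := fun t =>
    (a-b) * Real.log (1-t) - (a-b) * Real.log t - N * Real.log ((b+2)^2*t + a^2*(1-t))
    with hGb
  have hbounds : ∀ t ∈ Set.Icc x s, 0 < t ∧ 0 < 1-t ∧ 0 < (b+2)^2*t + a^2*(1-t) := by
    intro t htt
    obtain ⟨ht1, ht2⟩ := htt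
    have h1 : 0 < t := by linarith
    have h2 : 0 < 1 - t := by linarith
    refine ⟨h1, h2, by positivity⟩
  have hderiv : ∀ t ∈ Set.Ioo x s, HasDerivAt Gb
      ((a-b) * (-1/(1-t)) - (a-b) * (1/t) - N * (((b+2)^2 - a^2)/((b+2)^2*t + a^2*(1-t)))) t := by
    intro t htt
    obtain ⟨ht0, hq1, hq2⟩ := hbounds t ⟨le_of_lt htt.1, le_of_lt htt.2⟩
    have d3 : HasDerivAt (fun y : ℝ => 1 - y) (-1) t := by
      simpa using (hasDerivAt_id t).const_sub (1:ℝ)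
    have d4 : HasDerivAt (fun y : ℝ => (b+2)^2*y + a^2*(1-y)) ((b+2)^2 - a^2) t := by
      have := ((hasDerivAt_id t).const_mul ((b+2)^2)).fun_add (d3.const_mul (a^2))
      simpa [mul_comm, ← sub_eq_add_neg] using this
    have l1 : HasDerivAt (fun y : ℝ => Real.log (1-y)) (-1/(1-t)) t := by
      simpa [div_eq_mul_inv, mul_comm] using d3.log hq1.ne'
    have l2 : HasDerivAt (fun y : ℝ => Real.log y) (1/t) t := by
      simpa [div_eq_mul_inv] using (hasDerivAt_id t).log ht0.ne'
    have l3 : HasDerivAt (fun y : ℝ => Real.log ((b+2)^2*y + a^2*(1-y)))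
        (((b+2)^2 - a^2)/((b+2)^2*t + a^2*(1-t))) t := d4.log hq2.ne'
    exact ((l1.const_mul (a-b)).sub (l2.const_mul (a-b))).sub (l3.const_mul N)
  have hcont : ContinuousOn Gb (Set.Icc x s) := by
    apply ContinuousOn.sub
    · apply ContinuousOn.sub
      · exact continuousOn_const.mul ((continuousOn_const.sub continuousOn_id).log
          (fun t htt => (hbounds t htt).2.1.ne'))
      · exact continuousOn_const.mul (Real.continuousOn_log.comp continuousOn_id
          (fun t htt => Set.mem_compl_singleton_iff.mpr (hbounds t htt).1.ne'))
    · exact continuousOn_const.mul (((continuousOn_id.const_smul ((b+2)^2)).add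
        ((continuousOn_const.sub continuousOn_id).const_smul (a^2))).log
        (fun t htt => by
          have := (hbounds t htt).2.2
          simpa [smul_eq_mul] using this.ne'))
  have hanti : StrictAntiOn Gb (Set.Icc x s) := by
    apply strictAntiOn_of_deriv_neg (convex_Icc x s) hcont
    · intro t htt
      rw [interior_Icc] at htt
      rw [(hderiv t htt).deriv]
      obtain ⟨ht0, hq1, hq2⟩ := hbounds t ⟨le_of_lt htt.1, le_of_lt htt.2⟩
      have htN : t*N < a := by
        have h' := mul_lt_mul_of_pos_right htt.2 hN0
        linarith [hsN2]
      have hpB := polyB a b t N hab hb hN' ht0 htN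
      have htt' : 0 < t*(1-t) := mul_pos ht0 hq1
      have hkey : (N*(a^2-(b+2)^2))/((b+2)^2*t + a^2*(1-t)) < (a-b)/(t*(1-t)) := by
        rw [div_lt_div_iff₀ hq2 htt']
        ring_nf at hpB ⊢
        linarith [hpB]
      have e : (a-b) * (-1/(1-t)) - (a-b) * (1/t) - N * (((b+2)^2 - a^2)/((b+2)^2*t + a^2*(1-t)))
          = (N*(a^2-(b+2)^2))/((b+2)^2*t + a^2*(1-t)) - (a-b)/(t*(1-t)) := by
        field_simp
        ring
      rw [e]
      linarith
  have hGbx : Gb x > Gb s := by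
    exact hanti (Set.left_mem_Icc.mpr (le_of_lt hxs)) (Set.right_mem_Icc.mpr (le_of_lt hxs)) hxs
  -- exponentiate
  have hq2x : 0 < (b+2)^2*x + a^2*(1-x) := (hbounds x ⟨le_refl x, le_of_lt hxs⟩).2.2
  have h1x : 0 < 1 - x := by linarith
  have h1s : 0 < 1 - s := by linarith
  have hab0 : 0 < a - b := by linarith
  have hjr : a - b = ((k - m : ℕ) : ℝ) := by
    rw [ha', hb', Nat.cast_sub (by omega : m ≤ k)]
  have hNr : N = ((k + m + 2 : ℕ) : ℝ) := by rw [hN', ha', hb']; push_cast; ring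
  -- Gb x > Gb s unfolded, with hDs
  rw [hGb] at hGbx
  simp only at hGbx
  rw [hDs] at hGbx
  have ha0 : (0:ℝ) < a := by linarith
  have hc0 : (0:ℝ) < b + 2 := by linarith
  have hlogs : Real.log s = Real.log a - Real.log N := by
    rw [show s = a / N from (eq_div_iff hN0.ne').mpr hsN2, Real.log_div ha0.ne' hN0.ne']
  have h1sv : 1 - s = (b+2)/N := by
    rw [eq_div_iff hN0.ne', sub_mul, one_mul, hsN2, hN']; ring
  have hlog1s : Real.log (1-s) = Real.log (b+2) - Real.log N := by
    rw [h1sv, Real.log_div hc0.ne' hN0.ne']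
  rw [hlogs, hlog1s, Real.log_mul ha0.ne' hc0.ne'] at hGbx
  rw [← Real.log_lt_log_iff (by positivity) (by positivity),
    Real.log_mul (by positivity) (by positivity),
    Real.log_mul (by positivity) (by positivity),
    Real.log_mul (by positivity) (by positivity)]
  simp only [Real.log_pow]
  push_cast [Nat.cast_sub (show m ≤ k by omega)]
  simp only [hN', ha', hb'] at hGbx ⊢
  linarith [hGbx]

lemma pointB' (k m : ℕ) (hkm : m+2 ≤ k) (s x : ℝ)
    (hsN : s * ((k:ℝ)+(m:ℝ)+2) = (k:ℝ)) (hx0 : 0 < x) (hxs : x < s) :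
    x^k*(1-x)^m <
      ((k:ℝ)^2*(1-x)/(((m:ℝ)+2)^2*x + (k:ℝ)^2*(1-x)))^k
      * (1 - (k:ℝ)^2*(1-x)/(((m:ℝ)+2)^2*x + (k:ℝ)^2*(1-x)))^m
      * ((k:ℝ)^2*((m:ℝ)+2)^2/(((m:ℝ)+2)^2*x + (k:ℝ)^2*(1-x))^2) := by
  have hpB := pointB k m hkm s x hsN hx0 hxs
  obtain ⟨j, rfl⟩ : ∃ j, k = j + m + 2 := ⟨k - m - 2, by omega⟩
  have hx1 : x < 1 := by
    have hN0 : (0:ℝ) < ((j+m+2:ℕ):ℝ)+(m:ℝ)+2 := by positivity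
    have hs1 : s < 1 := by
      rw [show s = ((j+m+2:ℕ):ℝ) / (((j+m+2:ℕ):ℝ)+(m:ℝ)+2) from by
        field_simp at hsN ⊢; linarith [hsN], div_lt_one hN0]
      linarith
    linarith
  set a : ℝ := ((j+m+2:ℕ):ℝ) with ha'
  set c : ℝ := (m:ℝ)+2 with hc'
  set Dx : ℝ := c^2*x + a^2*(1-x) with hDx'
  clear_value a c Dx
  have ha0 : 0 < a := by rw [ha']; positivity
  have hc0 : 0 < c := by rw [hc']; positivity
  have h1x : 0 < 1 - x := by linarith
  have hDx0 : 0 < Dx := by rw [hDx']; positivity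
  have h1ρ : 1 - a^2*(1-x)/Dx = c^2*x/Dx := by
    rw [eq_div_iff hDx0.ne', sub_mul, one_mul, div_mul_cancel₀ _ hDx0.ne', hDx']
    ring
  rw [h1ρ, div_pow, div_pow]
  have e : (a^2*(1-x))^(j+m+2)/Dx^(j+m+2) * ((c^2*x)^m/Dx^m) * (a^2*c^2/Dx^2)
      = ((a^2*(1-x))^(j+m+2) * (c^2*x)^m * (a^2*c^2))/Dx^(j+m+2+m+2) := by
    rw [div_mul_div_comm, div_mul_div_comm, ← pow_add, ← pow_add]
  rw [e, lt_div_iff₀ (by positivity)]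
  -- reduce to pointB
  have ej : j + m + 2 - m = j + 2 := by omega
  rw [ej] at hpB
  have h3 := mul_lt_mul_of_pos_right hpB
    (show (0:ℝ) < x^m*(1-x)^m by positivity)
  calc x^(j+m+2)*(1-x)^m * Dx^(j+m+2+m+2)
      = x^(j+2) * Dx^(j+m+2+m+2) * (x^m*(1-x)^m) := by ring
    _ < a^(2*(j+m+2)+2) * c^(2*m+2) * (1-x)^(j+2) * (x^m*(1-x)^m) := h3
    _ = (a^2*(1-x))^(j+m+2) * (c^2*x)^m * (a^2*c^2) := by
        rw [mul_pow, mul_pow, ← pow_mul, ← pow_mul]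
        ring
noncomputable def gfun (n k : ℕ) (x : ℝ) : ℝ :=
  ∑ l ∈ Finset.range (k+1), (n.choose l : ℝ) * (x^l * (1-x)^(n-l))

lemma gfun_deriv (n k : ℕ) (hn : 0 < n) (hk : k ≤ n - 1) (x : ℝ) :
    HasDerivAt (gfun n k)
      (-((n:ℝ) * (((n-1).choose k : ℝ) * (x^k * (1-x)^(n-1-k))))) x := by
  have h := HasDerivAt.fun_sum (u := Finset.range (k+1))
    (A := fun l => fun y : ℝ => (n.choose l : ℝ) * (y^l * (1-y)^(n-l)))
    (A' := fun l => (n:ℝ) * (Ufun n x l - Ufun n x (l+1)))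
    (fun l hl => term_deriv n hn l (by simp at hl; omega) x)
  have e : ∑ l ∈ Finset.range (k+1), (n:ℝ) * (Ufun n x l - Ufun n x (l+1))
      = -((n:ℝ) * (((n-1).choose k : ℝ) * (x^k * (1-x)^(n-1-k)))) := by
    rw [← Finset.mul_sum, Finset.sum_range_sub' (Ufun n x) (k+1)]
    simp only [Ufun]
    ring
  rw [e] at h
  exact h

lemma gfun_zero (n k : ℕ) : gfun n k 0 = 1 := by
  unfold gfun
  rw [Finset.sum_eq_single 0]
  · simp
  · intro b hb hb0
    rw [zero_pow hb0]
    ring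
  · simp

lemma gfun_one (n k : ℕ) (hk : k < n) : gfun n k 1 = 0 := by
  unfold gfun
  apply Finset.sum_eq_zero
  intro l hl
  simp only [Finset.mem_range] at hl
  rw [sub_self, zero_pow (by omega : n - l ≠ 0)]
  ring

lemma gfun_pos (n k : ℕ) {x : ℝ} (h0 : 0 ≤ x) (h1 : x < 1) : 0 < gfun n k x := by
  unfold gfun
  apply Finset.sum_pos'
  · intro l hl
    have h2 : (0:ℝ) ≤ 1 - x := by linarith
    positivity
  · refine ⟨0, Finset.mem_range.mpr (by omega), ?_⟩
    have h2 : (0:ℝ) < 1 - x := by linarith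
    simp
    positivity

lemma gfun_cont (n k : ℕ) (hn : 0 < n) (hk : k ≤ n - 1) : Continuous (gfun n k) :=
  continuous_iff_continuousAt.mpr (fun x => (gfun_deriv n k hn hk x).continuousAt)

lemma gfun_anti (n k : ℕ) (hn : 0 < n) (hk : k ≤ n - 1) :
    AntitoneOn (gfun n k) (Set.Icc 0 1) := by
  apply antitoneOn_of_deriv_nonpos (convex_Icc 0 1)
    ((gfun_cont n k hn hk).continuousOn)
  · intro x hx
    exact (gfun_deriv n k hn hk x).differentiableAt.differentiableWithinAt
  · intro x hx
    rw [interior_Icc] at hx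
    rw [(gfun_deriv n k hn hk x).deriv]
    have h1 : (0:ℝ) ≤ x := le_of_lt hx.1
    have h2 : (0:ℝ) ≤ 1 - x := by linarith [hx.2]
    have : (0:ℝ) ≤ (n:ℝ) * (((n-1).choose k : ℝ) * (x^k * (1-x)^(n-1-k))) := by positivity
    linarith

set_option maxHeartbeats 2000000 in
theorem stmt_10 (q : ℝ) (hq : q ∈ Set.Ioo (0:ℝ) 1) (n : ℕ) (hn : 0 < n)
    (k : ℕ) (hk : (k : ℝ) - q * n > q) :
    (1:ℝ)/2 < ∑ l ∈ Finset.range (k+1), (n.choose l : ℝ) * q ^ l * (1 - q) ^ (n - l) := by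
  obtain ⟨hq0, hq1⟩ := hq
  have hgoal : ∑ l ∈ Finset.range (k+1), (n.choose l : ℝ) * q ^ l * (1 - q) ^ (n - l)
      = gfun n k q := by
    unfold gfun; apply Finset.sum_congr rfl; intros; ring
  rw [hgoal]
  rcases le_or_gt n k with hkn | hkn
  · -- trivial case: the sum is 1
    have he : gfun n k q = (q + (1-q))^n := by
      rw [add_pow]
      unfold gfun
      rw [← Finset.sum_subset (Finset.range_subset_range.mpr (show n+1 ≤ k+1 by omega))]
      · apply Finset.sum_congr rfl; intros; ring
      · intro l hl hl2
        simp only [Finset.mem_range] at hl hl2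
        rw [Nat.choose_eq_zero_of_lt (by omega : n < l)]
        norm_num
    rw [he]
    norm_num
  -- main case : k ≤ n - 1
  have hkn1 : k ≤ n - 1 := by omega
  set m : ℕ := n - 1 - k with hm
  have hnm : n = k + m + 1 := by omega
  have hk1 : 1 ≤ k := by
    by_contra h
    have : k = 0 := by omega
    rw [this] at hk
    simp at hk
    nlinarith [hk]
  have hn1 : (0:ℝ) < (n:ℝ) + 1 := by positivity
  set S : ℝ := (k:ℝ)/((n:ℝ)+1) with hS
  have hcast : (n:ℝ) + 1 = (k:ℝ) + (m:ℝ) + 2 := by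
    rw [hnm]; push_cast; ring
  have hsN : S * ((k:ℝ)+(m:ℝ)+2) = (k:ℝ) := by
    rw [hS, ← hcast]
    field_simp
  have hqS : q < S := by
    rw [hS, lt_div_iff₀ hn1]
    push_cast
    nlinarith [hk]
  have hS1 : S < 1 := by
    rw [hS, div_lt_one hn1]
    exact_mod_cast (by omega : k < n + 1)
  have hS0 : 0 < S := by
    rw [hS]
    positivity
  have hBIG : 1 < 2 * gfun n k q := by
    rcases le_or_gt k (m+1) with hA | hB
    · -- Case A : reflection at S
      have h2S : 2*S < 1 := by
        rw [hS, show 2*((k:ℝ)/((n:ℝ)+1)) = (2*(k:ℝ))/((n:ℝ)+1) from by ring,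
          div_lt_one hn1]
        exact_mod_cast (by omega : 2*k < n+1)
      set Φ : ℝ → ℝ := fun x => gfun n k x + gfun n k (2*S - x) with hΦ
      have hΦd : ∀ x : ℝ, HasDerivAt Φ
          ((n:ℝ) * (((n-1).choose k : ℝ) * ((2*S-x)^k * (1-(2*S-x))^(n-1-k)))
           - (n:ℝ) * (((n-1).choose k : ℝ) * (x^k * (1-x)^(n-1-k)))) x := by
        intro x
        have d1 : HasDerivAt (fun y : ℝ => 2*S - y) (-1) x := by
          simpa using (hasDerivAt_id x).const_sub (2*S)
        have d2 := (gfun_deriv n k hn hkn1 (2*S-x)).comp x d1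
        have d3 := (gfun_deriv n k hn hkn1 x).add d2
        refine d3.congr_deriv (Eq.symm ?_)
        ring
      have hΦc : Continuous Φ := by
        rw [hΦ]
        exact (gfun_cont n k hn hkn1).add ((gfun_cont n k hn hkn1).comp
          (continuous_const.sub continuous_id))
      have hmono : MonotoneOn Φ (Set.Icc 0 S) := by
        apply monotoneOn_of_deriv_nonneg (convex_Icc 0 S) hΦc.continuousOn
        · intro x hx
          exact (hΦd x).differentiableAt.differentiableWithinAt
        · intro x hx
          rw [interior_Icc] at hx
          rw [(hΦd x).deriv]
          have hpA := pointA k m hk1 hA S x hsN hx.1 hx.2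
          have hnk : n - 1 - k = m := by omega
          rw [hnk]
          have hge : (0:ℝ) ≤ (n:ℝ) * (((n-1).choose k:ℝ)) := by positivity
          nlinarith [mul_le_mul_of_nonneg_left hpA hge]
      have hΦq : Φ 0 ≤ Φ q :=
        hmono ⟨le_refl 0, hS0.le⟩ ⟨hq0.le, hqS.le⟩ hq0.le
      have hΦ0 : Φ 0 = 1 + gfun n k (2*S) := by
        rw [hΦ]
        simp [gfun_zero n k]
      have hg2S : 0 < gfun n k (2*S) := gfun_pos n k (by positivity) h2S
      have hgg : gfun n k (2*S - q) ≤ gfun n k q :=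
        gfun_anti n k hn hkn1 ⟨hq0.le, hq1.le⟩ ⟨by linarith, by linarith⟩ (by linarith)
      have hΦq2 : Φ q ≤ 2 * gfun n k q := by
        rw [hΦ]
        simp only
        linarith
      linarith
    · -- Case B : logit reflection
      have hkm : m + 2 ≤ k := by omega
      have ha0 : (0:ℝ) < (k:ℝ) := by exact_mod_cast hk1
      have hc0 : (0:ℝ) < (m:ℝ)+2 := by positivity
      set D : ℝ → ℝ := fun x => ((m:ℝ)+2)^2*x + (k:ℝ)^2*(1-x) with hD
      have hD0 : ∀ x : ℝ, 0 ≤ x → x < 1 → 0 < D x := by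
        intro x h0 h1
        rw [hD]
        simp only
        have t1 : 0 < (k:ℝ)^2*(1-x) := mul_pos (by positivity) (by linarith)
        have t2 : 0 ≤ ((m:ℝ)+2)^2*x := by positivity
        linarith
      set ρ : ℝ → ℝ := fun x => (k:ℝ)^2*(1-x) / D x with hρ
      have hρd : ∀ x : ℝ, 0 ≤ x → x < 1 → HasDerivAt ρ
          (-((k:ℝ)^2*((m:ℝ)+2)^2)/ (D x)^2) x := by
        intro x h0 h1
        have hDx := hD0 x h0 h1
        have du : HasDerivAt (fun y : ℝ => (k:ℝ)^2*(1-y)) (-((k:ℝ)^2)) x := by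
          have := ((hasDerivAt_const x (1:ℝ)).sub (hasDerivAt_id x)).const_mul ((k:ℝ)^2)
          simpa using this
        have dv : HasDerivAt D (((m:ℝ)+2)^2 - (k:ℝ)^2) x := by
          rw [hD]
          have := ((hasDerivAt_id x).const_mul (((m:ℝ)+2)^2)).fun_add
            (((hasDerivAt_const x (1:ℝ)).sub (hasDerivAt_id x)).const_mul ((k:ℝ)^2))
          simpa [mul_comm, ← sub_eq_add_neg] using this
        have hdiv := du.div dv hDx.ne'
        refine hdiv.congr_deriv (Eq.symm ?_)
        rw [hD]
        simp only
        field_simp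
        ring
      set Φ : ℝ → ℝ := fun x => gfun n k x + gfun n k (ρ x) with hΦ
      have hΦd : ∀ x : ℝ, 0 ≤ x → x < 1 → HasDerivAt Φ
          (-((n:ℝ) * (((n-1).choose k : ℝ) * (x^k * (1-x)^(n-1-k))))
           + -((n:ℝ) * (((n-1).choose k : ℝ) * ((ρ x)^k * (1-(ρ x))^(n-1-k))))
             * (-((k:ℝ)^2*((m:ℝ)+2)^2)/(D x)^2)) x := by
        intro x h0 h1
        exact (gfun_deriv n k hn hkn1 x).add
          ((gfun_deriv n k hn hkn1 (ρ x)).comp x (hρd x h0 h1))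
      have hΦc : ContinuousOn Φ (Set.Icc 0 S) := by
        rw [hΦ]
        apply ContinuousOn.add (gfun_cont n k hn hkn1).continuousOn
        apply (gfun_cont n k hn hkn1).comp_continuousOn
        rw [hρ]
        apply ContinuousOn.div
        · fun_prop
        · rw [hD]; fun_prop
        · intro x hx
          exact (hD0 x hx.1 (lt_of_le_of_lt hx.2 hS1)).ne'
      have hmono : StrictMonoOn Φ (Set.Icc 0 S) := by
        apply strictMonoOn_of_deriv_pos (convex_Icc 0 S) hΦc
        intro x hx
        rw [interior_Icc] at hx
        have hx1 : x < 1 := lt_trans hx.2 hS1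
        rw [(hΦd x hx.1.le hx1).deriv]
        have hDx := hD0 x hx.1.le hx1
        have hpB := pointB' k m hkm S x hsN hx.1 hx.2
        have hnk : n - 1 - k = m := by omega
        rw [hnk]
        have hCpos : (0:ℝ) < (n:ℝ) * (((n-1).choose k:ℝ)) := by
          have : 0 < (n-1).choose k := Nat.choose_pos (by omega)
          positivity
        have hexp : -((n:ℝ) * (((n-1).choose k : ℝ) * (x^k * (1-x)^m)))
           + -((n:ℝ) * (((n-1).choose k : ℝ) * ((ρ x)^k * (1-(ρ x))^m)))
             * (-((k:ℝ)^2*((m:ℝ)+2)^2)/(D x)^2)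
            = ((n:ℝ) * (((n-1).choose k:ℝ))) *
              ((ρ x)^k * (1-(ρ x))^m * ((k:ℝ)^2*((m:ℝ)+2)^2/(D x)^2)
                - x^k * (1-x)^m) := by
          field_simp
          ring
        rw [hexp]
        apply mul_pos hCpos
        rw [hρ, hD] at *
        simp only at hpB ⊢
        linarith [hpB]
      have hρ0 : ρ 0 = 1 := by
        rw [hρ, hD]
        simp only
        norm_num
        omega
      have hΦ0 : Φ 0 = 1 := by
        rw [hΦ]
        simp only [hρ0, gfun_zero n k, gfun_one n k hkn]
        norm_num
      have hΦq : Φ 0 < Φ q :=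
        hmono ⟨le_refl 0, hS0.le⟩ ⟨hq0.le, hqS.le⟩ hq0
      -- gfun (ρ q) ≤ gfun q
      have hDq : 0 < D q := hD0 q hq0.le hq1
      have hρq1 : ρ q ≤ 1 := by
        rw [hρ, div_le_one hDq, hD]
        simp only
        have t2 : 0 ≤ ((m:ℝ)+2)^2*q := by positivity
        linarith
      have hρq0 : 0 ≤ ρ q := by
        rw [hρ]
        have h1q : (0:ℝ) ≤ 1 - q := by linarith
        positivity
      have hqρ : q ≤ ρ q := by
        have hqN : q*((n:ℝ)+1) < (k:ℝ) := by
          rw [hS, lt_div_iff₀ hn1] at hqS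
          exact hqS
        have hSρ : S ≤ ρ q := by
          rw [hρ, le_div_iff₀ hDq, hS, div_mul_eq_mul_div, div_le_iff₀ hn1, hcast, hD]
          simp only
          have h2 : q*((m:ℝ)+2) < (k:ℝ)*(1-q) := by
            rw [hcast] at hqN
            nlinarith [hqN]
          nlinarith [mul_pos ha0 hc0, h2]
        linarith
      have hgg : gfun n k (ρ q) ≤ gfun n k q :=
        gfun_anti n k hn hkn1 ⟨hq0.le, hq1.le⟩ ⟨hρq0, hρq1⟩ hqρ
      have hΦq2 : Φ q ≤ 2 * gfun n k q := by
        rw [hΦ]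
        simp only
        linarith
      linarith
  calc (1:ℝ)/2 < (2 * gfun n k q)/2 := by linarith
    _ = gfun n k q := by ring
end

section
/- For the squared-error penalty function \hat{D}(a_0,...,a_n;p) = \sum_{k=0}^n \binom{n}{k} p^k(1-p)^{n-k}(p-a_k)^2 with a_k = 1/2 + (\sqrt{n}/(1+\sqrt{n}))(k/n - 1/2), the risk function \hat{D} is constant in p on [0,1], equal to 1/(4(1+\sqrt{n})^2). -/
open Finset

theorem stmt_11 (n : ℕ) (hn : 0 < n) :
    ∀ p ∈ Set.Icc (0:ℝ) 1,
      ∑ k ∈ Finset.range (n+1),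
        (n.choose k : ℝ) * p ^ k * (1 - p) ^ (n - k) *
          (p - (1/2 + (Real.sqrt n / (1 + Real.sqrt n)) * ((k : ℝ) / n - 1/2))) ^ 2
      = 1 / (4 * (1 + Real.sqrt n) ^ 2) := by
  intro p _
  set s := Real.sqrt n with hsdef
  have hsnn : (0:ℝ) ≤ s := Real.sqrt_nonneg _
  have hs0 : 0 < s := Real.sqrt_pos.mpr (by exact_mod_cast hn)
  have hs2 : s ^ 2 = (n : ℝ) := Real.sq_sqrt (by positivity)
  have hden : (1 : ℝ) + s ≠ 0 := by positivity
  have hn0 : (n : ℝ) ≠ 0 := by exact_mod_cast hn.ne'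
  -- Bernstein evaluation
  set B : ℕ → ℝ := fun k => (n.choose k : ℝ) * p ^ k * (1 - p) ^ (n - k) with hB
  have hb : ∀ k, (Polynomial.eval p (bernsteinPolynomial ℝ n k)) = B k := by
    intro k
    simp [bernsteinPolynomial, hB]
  have h0 : ∑ k ∈ Finset.range (n+1), B k = 1 := by
    have := congrArg (Polynomial.eval p) (bernsteinPolynomial.sum ℝ n)
    simpa [Polynomial.eval_finset_sum, hb] using this
  have h1 : ∑ k ∈ Finset.range (n+1), (k : ℝ) * B k = n * p := by
    have := congrArg (Polynomial.eval p) (bernsteinPolynomial.sum_smul ℝ n)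
    simpa [Polynomial.eval_finset_sum, hb, mul_comm] using this
  have h2 : ∑ k ∈ Finset.range (n+1), ((k * (k-1) : ℕ) : ℝ) * B k
      = (n * (n-1) : ℕ) * p ^ 2 := by
    have := congrArg (Polynomial.eval p) (bernsteinPolynomial.sum_mul_smul ℝ n)
    simpa [Polynomial.eval_finset_sum, hb, mul_comm] using this
  -- coefficients
  set α : ℝ := 1/2 - s / (2 * (1 + s)) with hα
  set β : ℝ := s / ((1 + s) * n) with hβ
  have expand : ∀ k : ℕ,
      (p - (1/2 + (s / (1 + s)) * ((k : ℝ) / n - 1/2))) ^ 2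
        = (p - α)^2 + (β^2 - 2*β*(p - α)) * (k : ℝ) + β^2 * ((k * (k-1) : ℕ) : ℝ) := by
    rintro (_ | k)
    · simp [hα, hβ]; field_simp; ring
    · have : ((k+1) * ((k+1)-1) : ℕ) = (k+1) * k := by simp
      rw [this]
      push_cast
      rw [hα, hβ]
      field_simp
      ring
  have split : ∑ k ∈ Finset.range (n+1),
      (n.choose k : ℝ) * p ^ k * (1 - p) ^ (n - k) *
        (p - (1/2 + (s / (1 + s)) * ((k : ℝ) / n - 1/2))) ^ 2
      = (p - α)^2 * (∑ k ∈ Finset.range (n+1), B k)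
        + (β^2 - 2*β*(p - α)) * (∑ k ∈ Finset.range (n+1), (k : ℝ) * B k)
        + β^2 * (∑ k ∈ Finset.range (n+1), ((k * (k-1) : ℕ) : ℝ) * B k) := by
    rw [Finset.mul_sum, Finset.mul_sum, Finset.mul_sum, ← Finset.sum_add_distrib,
      ← Finset.sum_add_distrib]
    refine Finset.sum_congr rfl fun k _ => ?_
    rw [expand k, hB]
    ring
  rw [split, h0, h1, h2]
  have hcast : ((n * (n-1) : ℕ) : ℝ) = (n:ℝ) * ((n:ℝ) - 1) := by
    push_cast [Nat.cast_sub hn]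
    ring
  rw [hcast, hα, hβ, ← hs2]
  have hs20 : s^2 ≠ 0 := by positivity
  field_simp
  ring
end

section
/- For the one-toss game (n=1): with a_0 = 1/4, a_1 = 3/4, the penalty function f(p) = (1-p)|p - 1/4| + p|p - 3/4| satisfies f(p) \le 1/4 for all p in [0,1], with equality at p = 0, 1/2, 1. -/
theorem stmt_13 :
    (∀ p ∈ Set.Icc (0:ℝ) 1, (1 - p) * |p - 1/4| + p * |p - 3/4| ≤ 1/4) ∧
    ((1 - (0:ℝ)) * |(0:ℝ) - 1/4| + 0 * |(0:ℝ) - 3/4| = 1/4) ∧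
    ((1 - (1/2:ℝ)) * |(1/2:ℝ) - 1/4| + (1/2) * |(1/2:ℝ) - 3/4| = 1/4) ∧
    ((1 - (1:ℝ)) * |(1:ℝ) - 1/4| + 1 * |(1:ℝ) - 3/4| = 1/4) := by
  refine ⟨?_, by norm_num [abs_of_nonpos, abs_of_nonneg], by norm_num [abs_of_nonneg, abs_of_nonpos], by norm_num [abs_of_nonneg]⟩
  rintro p ⟨h0, h1⟩
  rcases abs_cases (p - 1/4) with ⟨e1, _⟩ | ⟨e1, _⟩ <;>
  rcases abs_cases (p - 3/4) with ⟨e2, _⟩ | ⟨e2, _⟩ <;>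
  rw [e1, e2] <;> nlinarith [sq_nonneg (p - 1/2), sq_nonneg p, sq_nonneg (1-p)]
end

section
/- For the one-toss game, the measure \mu = (1/4)\delta_0 + (1/2)\delta_{1/2} + (1/4)\delta_1 satisfies: for all a_0 \in [0,1/2] and a_1 \in [1/2,1], \int_0^1 D(a_0,a_1;p) d\mu(p) = 1/4, and for all a_0, a_1 \in [0,1], \int_0^1 D(a_0,a_1;p) d\mu(p) \ge 1/4. -/
/-- Penalty function for one toss. -/
noncomputable def D1 (a₀ a₁ p : ℝ) : ℝ := (1 - p) * |p - a₀| + p * |p - a₁|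

theorem stmt_14 :
    (∀ a₀ ∈ Set.Icc (0:ℝ) (1/2), ∀ a₁ ∈ Set.Icc (1/2:ℝ) 1,
      (1/4) * D1 a₀ a₁ 0 + (1/2) * D1 a₀ a₁ (1/2) + (1/4) * D1 a₀ a₁ 1 = 1/4) ∧
    (∀ a₀ ∈ Set.Icc (0:ℝ) 1, ∀ a₁ ∈ Set.Icc (0:ℝ) 1,
      1/4 ≤ (1/4) * D1 a₀ a₁ 0 + (1/2) * D1 a₀ a₁ (1/2) + (1/4) * D1 a₀ a₁ 1) := by
  constructor
  · rintro a₀ ⟨h1, h2⟩ a₁ ⟨h3, h4⟩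
    unfold D1
    rw [abs_of_nonpos (by linarith : (0:ℝ) - a₀ ≤ 0),
      abs_of_nonpos (by linarith : (0:ℝ) - a₁ ≤ 0),
      abs_of_nonneg (by linarith : (0:ℝ) ≤ 1/2 - a₀),
      abs_of_nonpos (by linarith : (1/2:ℝ) - a₁ ≤ 0),
      abs_of_nonneg (by linarith : (0:ℝ) ≤ 1 - a₀),
      abs_of_nonneg (by linarith : (0:ℝ) ≤ 1 - a₁)]
    ring
  · rintro a₀ ⟨h1, h2⟩ a₁ ⟨h3, h4⟩
    unfold D1
    rcases abs_cases ((0:ℝ) - a₀) with ⟨e1, _⟩ | ⟨e1, _⟩ <;>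
    rcases abs_cases ((1/2:ℝ) - a₀) with ⟨e2, _⟩ | ⟨e2, _⟩ <;>
    rcases abs_cases ((1/2:ℝ) - a₁) with ⟨e3, _⟩ | ⟨e3, _⟩ <;>
    rcases abs_cases ((1:ℝ) - a₁) with ⟨e4, _⟩ | ⟨e4, _⟩ <;>
    rw [e1, e2, e3, e4] <;> linarith
end

section
/- For n=2, any optimal choice (a_0,a_1,a_2) for minimizing \|D(a_0,a_1,a_2;\cdot)\|_\infty satisfies 0 < a_0 < 0.2, 0.4 < a_1 < 0.6, 0.8 < a_2 < 1, and additionally a_1 - a_0 < 0.4 and a_2 - a_1 < 0.4. -/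
/-- Penalty function for two tosses. -/
noncomputable def D2 (a₀ a₁ a₂ p : ℝ) : ℝ :=
  (1 - p)^2 * |p - a₀| + 2 * p * (1 - p) * |p - a₁| + p^2 * |p - a₂|

lemma cand_bound : ∀ p ∈ Set.Icc (0:ℝ) 1,
    D2 (39/200) (1/2) (161/200) p ≤ 39/200 := by
  rintro p ⟨h0, h1⟩
  unfold D2
  rcases le_total p (39/200) with hc | hc
  · rw [abs_of_nonpos (by linarith), abs_of_nonpos (by linarith),
      abs_of_nonpos (by linarith)]
    nlinarith [sq_nonneg p, sq_nonneg (1-p), sq_nonneg (p - 39/200), mul_nonneg h0 h0,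
      mul_nonneg (mul_nonneg h0 h0) h0]
  · rcases le_total p (1/2) with hc1 | hc1
    · rw [abs_of_nonneg (by linarith), abs_of_nonpos (by linarith),
        abs_of_nonpos (by linarith)]
      nlinarith [mul_nonneg (sub_nonneg.2 hc) (sub_nonneg.2 hc1),
        mul_nonneg (mul_nonneg (sub_nonneg.2 hc) (sub_nonneg.2 hc1)) h0,
        mul_nonneg (mul_nonneg (sub_nonneg.2 hc) (sub_nonneg.2 hc1)) (sub_nonneg.2 hc),
        mul_nonneg (mul_nonneg (sub_nonneg.2 hc) (sub_nonneg.2 hc1)) (sub_nonneg.2 hc1),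
        sq_nonneg (p - 39/200), sq_nonneg (p - 1/2), sq_nonneg (p - 7/20)]
    · rcases le_total p (161/200) with hc2 | hc2
      · rw [abs_of_nonneg (by linarith), abs_of_nonneg (by linarith),
          abs_of_nonpos (by linarith)]
        nlinarith [mul_nonneg (sub_nonneg.2 hc1) (sub_nonneg.2 hc2),
          mul_nonneg (mul_nonneg (sub_nonneg.2 hc1) (sub_nonneg.2 hc2)) h0,
          mul_nonneg (mul_nonneg (sub_nonneg.2 hc1) (sub_nonneg.2 hc2)) (sub_nonneg.2 hc1),
          mul_nonneg (mul_nonneg (sub_nonneg.2 hc1) (sub_nonneg.2 hc2)) (sub_nonneg.2 hc2),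
          sq_nonneg (p - 1/2), sq_nonneg (p - 161/200), sq_nonneg (p - 13/20)]
      · rw [abs_of_nonneg (by linarith), abs_of_nonneg (by linarith),
          abs_of_nonneg (by linarith)]
        nlinarith [mul_nonneg (sub_nonneg.2 hc2) (sub_nonneg.2 h1),
          mul_nonneg (mul_nonneg (sub_nonneg.2 hc2) (sub_nonneg.2 h1)) h0,
          sq_nonneg (p - 161/200), sq_nonneg (1 - p),
          mul_nonneg (mul_nonneg (sub_nonneg.2 hc2) (sub_nonneg.2 h1)) (sub_nonneg.2 hc2)]

lemma D2_bdd (a₀ a₁ a₂ : ℝ)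
    (h0 : a₀ ∈ Set.Icc (0:ℝ) 1) (h1 : a₁ ∈ Set.Icc (0:ℝ) 1)
    (h2 : a₂ ∈ Set.Icc (0:ℝ) 1) :
    BddAbove ((fun p => D2 a₀ a₁ a₂ p) '' Set.Icc (0:ℝ) 1) := by
  refine ⟨1, ?_⟩
  rintro x ⟨p, ⟨hp0, hp1⟩, rfl⟩
  obtain ⟨g0, g0'⟩ := h0; obtain ⟨g1, g1'⟩ := h1; obtain ⟨g2, g2'⟩ := h2
  have e0 : |p - a₀| ≤ 1 := abs_le.2 ⟨by linarith, by linarith⟩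
  have e1 : |p - a₁| ≤ 1 := abs_le.2 ⟨by linarith, by linarith⟩
  have e2 : |p - a₂| ≤ 1 := abs_le.2 ⟨by linarith, by linarith⟩
  have w0 : (0:ℝ) ≤ (1 - p)^2 := sq_nonneg _
  have w1 : (0:ℝ) ≤ 2 * p * (1 - p) := by nlinarith
  have w2 : (0:ℝ) ≤ p^2 := sq_nonneg _
  show D2 a₀ a₁ a₂ p ≤ 1
  unfold D2
  nlinarith [mul_le_mul_of_nonneg_left e0 w0, mul_le_mul_of_nonneg_left e1 w1,
    mul_le_mul_of_nonneg_left e2 w2]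

theorem stmt_15 (a₀ a₁ a₂ : ℝ)
    (hmem : a₀ ∈ Set.Icc (0:ℝ) 1 ∧ a₁ ∈ Set.Icc (0:ℝ) 1 ∧ a₂ ∈ Set.Icc (0:ℝ) 1)
    (hopt : ∀ b₀ ∈ Set.Icc (0:ℝ) 1, ∀ b₁ ∈ Set.Icc (0:ℝ) 1, ∀ b₂ ∈ Set.Icc (0:ℝ) 1,
      sSup ((fun p => D2 a₀ a₁ a₂ p) '' Set.Icc (0:ℝ) 1) ≤
        sSup ((fun p => D2 b₀ b₁ b₂ p) '' Set.Icc (0:ℝ) 1)) :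
    0 < a₀ ∧ a₀ < 0.2 ∧ 0.4 < a₁ ∧ a₁ < 0.6 ∧ 0.8 < a₂ ∧ a₂ < 1 ∧
      a₁ - a₀ < 0.4 ∧ a₂ - a₁ < 0.4 := by
  obtain ⟨h0, h1, h2⟩ := hmem
  have hScand : sSup ((fun p => D2 (39/200) (1/2) (161/200) p) '' Set.Icc (0:ℝ) 1)
      ≤ 39/200 := by
    apply Real.sSup_le
    · rintro x ⟨p, hp, rfl⟩
      exact cand_bound p hp
    · norm_num
  have hS : sSup ((fun p => D2 a₀ a₁ a₂ p) '' Set.Icc (0:ℝ) 1) ≤ 39/200 :=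
    le_trans (hopt (39/200) (by norm_num) (1/2) (by norm_num) (161/200) (by norm_num))
      hScand
  have hP : ∀ p ∈ Set.Icc (0:ℝ) 1, D2 a₀ a₁ a₂ p ≤ 39/200 := fun p hp =>
    le_trans (le_csSup (D2_bdd a₀ a₁ a₂ h0 h1 h2) (Set.mem_image_of_mem _ hp)) hS
  obtain ⟨g0, g0'⟩ := h0; obtain ⟨g1, g1'⟩ := h1; obtain ⟨g2, g2'⟩ := h2
  have q0 := hP 0 (by norm_num)
  have q1 := hP 1 (by norm_num)
  have q15 := hP (1/5) (by norm_num)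
  have q13 := hP (1/3) (by norm_num)
  have q12 := hP (1/2) (by norm_num)
  have q23 := hP (2/3) (by norm_num)
  have q45 := hP (4/5) (by norm_num)
  unfold D2 at q0 q1 q15 q13 q12 q23 q45
  norm_num at q0 q1 q15 q13 q12 q23 q45
  rw [abs_of_nonneg g0] at q0
  rw [abs_of_nonneg (by linarith : (0:ℝ) ≤ 1 - a₂)] at q1
  -- basic abs facts at each evaluation point
  have A := le_abs_self ((1:ℝ)/5 - a₀); have A' := neg_abs_le ((1:ℝ)/5 - a₀)
  have B := le_abs_self ((1:ℝ)/5 - a₁); have B' := neg_abs_le ((1:ℝ)/5 - a₁)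
  have C := le_abs_self ((1:ℝ)/5 - a₂); have C' := neg_abs_le ((1:ℝ)/5 - a₂)
  have A3 := le_abs_self ((1:ℝ)/3 - a₀); have A3' := neg_abs_le ((1:ℝ)/3 - a₀)
  have B3 := le_abs_self ((1:ℝ)/3 - a₁); have B3' := neg_abs_le ((1:ℝ)/3 - a₁)
  have C3 := le_abs_self ((1:ℝ)/3 - a₂); have C3' := neg_abs_le ((1:ℝ)/3 - a₂)
  have A2 := le_abs_self ((1:ℝ)/2 - a₀); have A2' := neg_abs_le ((1:ℝ)/2 - a₀)
  have B2 := le_abs_self ((1:ℝ)/2 - a₁); have B2' := neg_abs_le ((1:ℝ)/2 - a₁)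
  have C2 := le_abs_self ((1:ℝ)/2 - a₂); have C2' := neg_abs_le ((1:ℝ)/2 - a₂)
  have A6 := le_abs_self ((2:ℝ)/3 - a₀); have A6' := neg_abs_le ((2:ℝ)/3 - a₀)
  have B6 := le_abs_self ((2:ℝ)/3 - a₁); have B6' := neg_abs_le ((2:ℝ)/3 - a₁)
  have C6 := le_abs_self ((2:ℝ)/3 - a₂); have C6' := neg_abs_le ((2:ℝ)/3 - a₂)
  have A8 := le_abs_self ((4:ℝ)/5 - a₀); have A8' := neg_abs_le ((4:ℝ)/5 - a₀)
  have B8 := le_abs_self ((4:ℝ)/5 - a₁); have B8' := neg_abs_le ((4:ℝ)/5 - a₁)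
  have C8 := le_abs_self ((4:ℝ)/5 - a₂); have C8' := neg_abs_le ((4:ℝ)/5 - a₂)
  have hA0 : a₀ ≤ 39/200 := q0
  have hA2 : a₂ ≥ 161/200 := by linarith only [q1]
  -- a₁ bounds from p = 1/2
  have hA1lo : a₁ ≥ 83/200 := by
    have habs0 : |(1:ℝ)/2 - a₀| ≥ 1/2 - 39/200 := by
      rw [abs_of_nonneg (by linarith only [hA0])]; linarith only [hA0]
    have habs2 : |(1:ℝ)/2 - a₂| ≥ 161/200 - 1/2 := by
      rw [abs_of_nonpos (by linarith only [hA2])]; linarith only [hA2]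
    linarith only [q12, B2, habs0, habs2]
  have hA1hi : a₁ ≤ 117/200 := by
    have habs0 : |(1:ℝ)/2 - a₀| ≥ 1/2 - 39/200 := by
      rw [abs_of_nonneg (by linarith only [hA0])]; linarith only [hA0]
    have habs2 : |(1:ℝ)/2 - a₂| ≥ 161/200 - 1/2 := by
      rw [abs_of_nonpos (by linarith only [hA2])]; linarith only [hA2]
    linarith only [q12, B2', habs0, habs2]
  -- a₀ > 0 from p = 1/5
  have hA0pos : 0 < a₀ := by linarith only [q15, A, B', C', hA1lo, hA2]
  -- a₂ < 1 from p = 4/5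
  have hA2hi : a₂ < 1 := by linarith only [q45, A8, B8, C8', hA0, hA1hi]
  -- gaps from p = 1/3 and p = 2/3
  have gap1 : a₁ - a₀ < 2/5 := by linarith only [q13, A3, B3', C3', hA2]
  have gap2 : a₂ - a₁ < 2/5 := by linarith only [q23, A6, B6, C6', hA0]
  norm_num
  exact ⟨hA0pos, by linarith only [hA0], by linarith only [hA1lo],
    by linarith only [hA1hi], by linarith only [hA2], hA2hi, gap1, gap2⟩
end

section
/- Let p_1 \in (0,1) satisfy (1-p_1)^3 = 2p_1^2, and set a_0 = 2p_1(1-p_1)^2/(p_1^2 + (1-p_1)^2 + 1), a_1 = 1/2, a_2 = 1 - a_0. Then the penalty function f(p) = (1-p)^2|p-a_0| + 2p(1-p)|p-a_1| + p^2|p-a_2| satisfies f(0) = f(1) = f(p_1) = f(1-p_1) = a_0 and f(p) \le a_0 for all p \in [0,1]. -/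
theorem stmt_18 (p₁ : ℝ) (hp₁ : p₁ ∈ Set.Ioo (0:ℝ) 1)
    (heq : (1 - p₁)^3 = 2 * p₁^2)
    (a₀ a₁ a₂ : ℝ)
    (ha₀ : a₀ = 2 * p₁ * (1 - p₁)^2 / (p₁^2 + (1 - p₁)^2 + 1))
    (ha₁ : a₁ = 1/2) (ha₂ : a₂ = 1 - a₀)
    (f : ℝ → ℝ)
    (hf : f = fun p => (1 - p)^2 * |p - a₀| + 2 * p * (1 - p) * |p - a₁| + p^2 * |p - a₂|) :
    f 0 = a₀ ∧ f 1 = a₀ ∧ f p₁ = a₀ ∧ f (1 - p₁) = a₀ ∧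
      ∀ p ∈ Set.Icc (0:ℝ) 1, f p ≤ a₀ := by
  obtain ⟨hp0, hp1l⟩ := hp₁
  subst ha₁ ha₂ hf
  have hcubic : p₁^3 - p₁^2 + 3*p₁ - 1 = 0 := by linear_combination -heq
  have h1p : (1:ℝ) + p₁ ≠ 0 := by positivity
  have hD : p₁^2 + (1-p₁)^2 + 1 ≠ 0 := by positivity
  have hAD : a₀ * (p₁^2 + (1-p₁)^2 + 1) = 2 * p₁ * (1-p₁)^2 := by
    rw [ha₀]; field_simp
  have hK : a₀ * (1 + p₁) = 2 * p₁^2 :=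
    mul_right_cancel₀ hD (by linear_combination (1+p₁)*hAD + (-2*p₁)*hcubic)
  have hp_half : p₁ < 1/2 := by nlinarith [sq_nonneg p₁, mul_pos hp0 hp0]
  have ha₀pos : 0 < a₀ := by nlinarith [mul_pos hp0 hp0]
  have ha₀lt : a₀ < p₁ := by nlinarith [mul_pos hp0 (sub_pos.mpr hp1l)]
  have ha₀half : a₀ < 1/2 := lt_trans ha₀lt hp_half
  have h1 : p₁^2 * (2 + a₀ - 2*p₁) = a₀ := by linear_combination (p₁ - 1) * hK
  have h2 : p₁^2 + 2*p₁*(2 + a₀ - 2*p₁) = 1 + a₀ :=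
    mul_right_cancel₀ h1p (by linear_combination hcubic + (2*p₁-1)*hK)
  have g1 : (1-p₁)^2 * (1 + a₀ - 2*p₁) = a₀ :=
    mul_right_cancel₀ h1p (by linear_combination -hcubic + ((1-p₁)^2-1)*hK)
  have g2 : 2*(1-p₁)*(1 + a₀ - 2*p₁) - (1-p₁)^2 = a₀ :=
    mul_right_cancel₀ h1p (by linear_combination -hcubic + (1-2*p₁)*hK)
  have idB : ∀ p : ℝ, 2*p^3 - (4+2*a₀)*p^2 + (2+2*a₀)*p - a₀
      = a₀ - 2*(p-p₁)^2*(2 + a₀ - 2*p₁ - p) := fun p => by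
    linear_combination (-2*p)*h2 + 2*h1
  have idC : ∀ p : ℝ, -2*p^3 + (2-2*a₀)*p^2 + 2*a₀*p - a₀
      = a₀ - 2*(p-(1-p₁))^2*(1 + a₀ - 2*p₁ + p) := fun p => by
    linear_combination (-2*p)*g2 + 2*g1
  -- value computations
  have hfB : ∀ p : ℝ, a₀ ≤ p → p ≤ 1/2 →
      (1 - p)^2 * |p - a₀| + 2 * p * (1 - p) * |p - (1/2)| + p^2 * |p - (1 - a₀)|
        = a₀ - 2*(p-p₁)^2*(2 + a₀ - 2*p₁ - p) := by
    intro p h1' h2'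
    rw [abs_of_nonneg (by linarith : (0:ℝ) ≤ p - a₀),
        abs_of_nonpos (by linarith : p - (1/2:ℝ) ≤ 0),
        abs_of_nonpos (by linarith : p - (1 - a₀) ≤ 0)]
    linear_combination idB p
  have hfC : ∀ p : ℝ, 1/2 ≤ p → p ≤ 1 - a₀ →
      (1 - p)^2 * |p - a₀| + 2 * p * (1 - p) * |p - (1/2)| + p^2 * |p - (1 - a₀)|
        = a₀ - 2*(p-(1-p₁))^2*(1 + a₀ - 2*p₁ + p) := by
    intro p h1' h2'
    rw [abs_of_nonneg (by linarith : (0:ℝ) ≤ p - a₀),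
        abs_of_nonneg (by linarith : (0:ℝ) ≤ p - (1/2:ℝ)),
        abs_of_nonpos (by linarith : p - (1 - a₀) ≤ 0)]
    linear_combination idC p
  have hfA : ∀ p : ℝ, 0 ≤ p → p ≤ a₀ →
      (1 - p)^2 * |p - a₀| + 2 * p * (1 - p) * |p - (1/2)| + p^2 * |p - (1 - a₀)|
        = a₀ - 2*a₀*p := by
    intro p h1' h2'
    rw [abs_of_nonpos (by linarith : p - a₀ ≤ 0),
        abs_of_nonpos (by linarith : p - (1/2:ℝ) ≤ 0),
        abs_of_nonpos (by linarith : p - (1 - a₀) ≤ 0)]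
    ring
  have hfD : ∀ p : ℝ, 1 - a₀ ≤ p → p ≤ 1 →
      (1 - p)^2 * |p - a₀| + 2 * p * (1 - p) * |p - (1/2)| + p^2 * |p - (1 - a₀)|
        = a₀ - 2*a₀*(1-p) := by
    intro p h1' h2'
    rw [abs_of_nonneg (by linarith : (0:ℝ) ≤ p - a₀),
        abs_of_nonneg (by linarith : (0:ℝ) ≤ p - (1/2:ℝ)),
        abs_of_nonneg (by linarith : (0:ℝ) ≤ p - (1 - a₀))]
    ring
  refine ⟨?_, ?_, ?_, ?_, ?_⟩
  · simpa using hfA 0 le_rfl ha₀pos.le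
  · have := hfD 1 (by linarith) le_rfl
    simpa using this
  · have := hfB p₁ ha₀lt.le hp_half.le
    simp only at this ⊢
    rw [this]; ring
  · have := hfC (1 - p₁) (by linarith) (by linarith)
    simp only at this ⊢
    rw [this]; ring
  · rintro p ⟨hq0, hq1⟩
    simp only
    rcases le_or_gt p a₀ with hA | hA
    · rw [hfA p hq0 hA]
      nlinarith [mul_nonneg ha₀pos.le hq0]
    · rcases le_or_gt p (1/2) with hB | hB
      · rw [hfB p hA.le hB]
        nlinarith [mul_nonneg (sq_nonneg (p - p₁))
          (by linarith : (0:ℝ) ≤ 2 + a₀ - 2*p₁ - p)]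
      · rcases le_or_gt p (1 - a₀) with hC | hC
        · rw [hfC p hB.le hC]
          nlinarith [mul_nonneg (sq_nonneg (p - (1-p₁)))
            (by linarith : (0:ℝ) ≤ 1 + a₀ - 2*p₁ + p)]
        · rw [hfD p hC.le hq1]
          nlinarith [mul_nonneg ha₀pos.le (by linarith : (0:ℝ) ≤ 1 - p)]
end
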